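/- arXiv:1109.4673 — 6 statements merged into one kernel-verified Lean document; each statement's English description precedes it below -/
import Mathlib

section
/- The tenacity of the cycle C_n on n vertices equals (n+3)/(n−1) if n is odd, and (n+2)/n if n is even (for n ≥ 4; for odd n ≥ 5). -/
open SimpleGraph

/-- Number of connected components `ω(G)`. -/
noncomputable def SimpleGraph.omegaComp {W : Type*} (G : SimpleGraph W) : ℕ :=
  Nat.card G.ConnectedComponent

/-- Order `τ(G)` of a largest connected component of `G`. -/
noncomputable def SimpleGraph.tauMax {W : Type*} (G : SimpleGraph W) : ℕ :=
  sSup (Set.range fun c : G.ConnectedComponent =>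
    Nat.card {v : W // G.connectedComponentMk v = c})

/-- The graph `G - X` obtained by deleting the vertices of `X`. -/
def SimpleGraph.delVerts {V : Type*} (G : SimpleGraph V) (X : Finset V) :
    SimpleGraph {v : V // v ∉ X} :=
  SimpleGraph.comap Subtype.val G

/-- `X` is a vertex cut of `G`: deleting `X` leaves more than one component. -/
def SimpleGraph.IsVertexCut {V : Type*} (G : SimpleGraph V) (X : Finset V) : Prop :=
  1 < (G.delVerts X).omegaComp

/-- The tenacity `T(G) = min over vertex cuts X of (|X| + τ(G−X)) / ω(G−X)`. -/
noncomputable def SimpleGraph.tenacity {V : Type*} [Fintype V] (G : SimpleGraph V) : ℝ :=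
  sInf { t : ℝ | ∃ X : Finset V, G.IsVertexCut X ∧
    t = ((X.card : ℝ) + (G.delVerts X).tauMax) / (G.delVerts X).omegaComp }

/-- Vertex degree via `Nat.card` (no decidability assumptions needed). -/
noncomputable def SimpleGraph.deg {V : Type*} (G : SimpleGraph V) (v : V) : ℕ :=
  Nat.card (G.neighborSet v)

/-- A unicyclic graph: connected with as many edges as vertices. -/
def SimpleGraph.Unicyclic {V : Type*} [Fintype V] (G : SimpleGraph V) : Prop :=
  G.Connected ∧ Nat.card G.edgeSet = Fintype.card V

set_option linter.unusedSectionVars false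
set_option maxHeartbeats 1000000


lemma arith_even (n k w t : ℤ) (hn : 4 ≤ n) (hw2 : 2 ≤ w) (hwk : w ≤ k)
    (hwm : w ≤ n - k) (hN : n - k ≤ w * t) : (n+2)*w ≤ n*(k+t) := by
  nlinarith [mul_nonneg (sub_nonneg.2 hw2) (sub_nonneg.2 hwk),
    mul_nonneg (sub_nonneg.2 hw2) (sub_nonneg.2 hwm),
    mul_nonneg (sub_nonneg.2 hwk) (sub_nonneg.2 hwm), sq_nonneg (w - 2), sq_nonneg w]



lemma arith_oddA (n k w t : ℤ) (hn : 5 ≤ n) (hodd : Odd n) (hw2 : 2 ≤ w) (hwk : w ≤ k)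
    (hwm : w ≤ n - k) (hN : n - k ≤ w * t) (ht : 2 ≤ t) : (n+3)*w ≤ (n-1)*(k+t) := by
  obtain ⟨j, rfl⟩ := hodd
  rcases le_or_gt (2*j+1-k) (2*w) with hm | hm
  · -- t ≥ 2 suffices
    rcases le_or_gt k j with hk | hk
    · nlinarith [mul_nonneg (by linarith : (0:ℤ) ≤ 2*j+4) (sub_nonneg.2 hwk),
        mul_nonneg (by linarith : (0:ℤ) ≤ 2*j) (sub_nonneg.2 ht)]
    · nlinarith [mul_nonneg (by linarith : (0:ℤ) ≤ 2*j+4) (sub_nonneg.2 hwm),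
        mul_nonneg (by linarith : (0:ℤ) ≤ 2*j) (sub_nonneg.2 ht)]
  · nlinarith [mul_nonneg (sub_nonneg.2 hw2) (sub_nonneg.2 hwk),
      mul_nonneg (sub_nonneg.2 hw2) (by linarith : (0:ℤ) ≤ 2*j+1-k-2*w),
      mul_nonneg (sub_nonneg.2 hwk) (by linarith : (0:ℤ) ≤ 2*j+1-k-2*w),
      mul_nonneg (sub_nonneg.2 hw2) (sub_nonneg.2 hwm),
      mul_nonneg (sub_nonneg.2 hwk) (sub_nonneg.2 hwm), sq_nonneg (w-2), sq_nonneg (k-w)]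


lemma arith_oddB (n k w : ℤ) (hn : 5 ≤ n) (hw2 : 2 ≤ w) (hwk : w ≤ k)
    (hwm : w = n - k) (hodd : Odd n) : (n+3)*w ≤ (n-1)*(k+1) := by
  obtain ⟨j, rfl⟩ := hodd
  have hk : j + 1 ≤ k := by omega
  nlinarith [mul_nonneg (by linarith : (0:ℤ) ≤ j+1) (sub_nonneg.2 hk)]

section Counting
variable {W : Type*} [Finite W] (G : SimpleGraph W)

lemma fiber_nonempty (c : G.ConnectedComponent) :
    Nonempty {v : W // G.connectedComponentMk v = c} := by
  obtain ⟨v, hv⟩ := c.exists_rep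
  exact ⟨⟨v, hv⟩⟩

lemma fiber_card_pos (c : G.ConnectedComponent) :
    1 ≤ Nat.card {v : W // G.connectedComponentMk v = c} :=
  Nat.one_le_iff_ne_zero.2 (Nat.card_ne_zero.2 ⟨fiber_nonempty G c, Subtype.finite⟩)

lemma fiber_le_tau (c : G.ConnectedComponent) :
    Nat.card {v : W // G.connectedComponentMk v = c} ≤ G.tauMax := by
  have : Finite G.ConnectedComponent := Finite.of_surjective _ Quot.mk_surjective
  exact le_csSup ((Set.finite_range _).bddAbove) (Set.mem_range_self c)

lemma omega_le_card : G.omegaComp ≤ Nat.card W :=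
  Nat.card_le_card_of_surjective _ Quot.mk_surjective

lemma card_eq_sum_fibers [Fintype G.ConnectedComponent] :
    Nat.card W = ∑ c : G.ConnectedComponent,
      Nat.card {v : W // G.connectedComponentMk v = c} := by
  classical
  cases nonempty_fintype W
  rw [Nat.card_eq_fintype_card,
    ← Fintype.card_congr (Equiv.sigmaFiberEquiv (G.connectedComponentMk ·))]
  simp [Fintype.card_sigma, Nat.card_eq_fintype_card]

lemma card_le_omega_mul_tau : Nat.card W ≤ G.omegaComp * G.tauMax := by
  have : Finite G.ConnectedComponent := Finite.of_surjective _ Quot.mk_surjective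
  cases nonempty_fintype G.ConnectedComponent
  calc Nat.card W = ∑ c : G.ConnectedComponent,
      Nat.card {v : W // G.connectedComponentMk v = c} := card_eq_sum_fibers G
  _ ≤ ∑ _c : G.ConnectedComponent, G.tauMax :=
      Finset.sum_le_sum fun c _ => fiber_le_tau G c
  _ = G.omegaComp * G.tauMax := by
      simp [SimpleGraph.omegaComp, Nat.card_eq_fintype_card, Finset.sum_const, Finset.card_univ,
        mul_comm]

lemma card_eq_omega_of_tau_le_one (h : G.tauMax ≤ 1) : Nat.card W = G.omegaComp := by
  have : Finite G.ConnectedComponent := Finite.of_surjective _ Quot.mk_surjective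
  cases nonempty_fintype G.ConnectedComponent
  rw [card_eq_sum_fibers G, SimpleGraph.omegaComp, Nat.card_eq_fintype_card, ← Finset.card_univ,
    Finset.card_eq_sum_ones]
  exact Finset.sum_congr rfl fun c _ =>
    le_antisymm ((fiber_le_tau G c).trans h) (fiber_card_pos G c)

namespace CycCut
open Fin.NatCast Fin.CommRing

variable {m : ℕ} (X : Finset (Fin (m+2)))

lemma exP (hX : X.Nonempty) (v : Fin (m+2)) : ∃ t : ℕ, v + (t : Fin (m+2)) ∈ X := by
  obtain ⟨x, hx⟩ := hX
  exact ⟨(x - v).val, by simpa [Fin.cast_val_eq_self] using hx⟩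

noncomputable def dX (hX : X.Nonempty) (v : Fin (m+2)) : ℕ := Nat.find (exP X hX v)

variable (hX : X.Nonempty)

lemma d_spec (v : Fin (m+2)) : v + ((dX X hX v : ℕ) : Fin (m+2)) ∈ X := Nat.find_spec (exP X hX v)

lemma d_min {v : Fin (m+2)} {t : ℕ} (ht : t < dX X hX v) : v + (t : Fin (m+2)) ∉ X :=
  Nat.find_min (exP X hX v) ht

lemma d_pos {v : Fin (m+2)} (hv : v ∉ X) : 0 < dX X hX v := by
  rcases Nat.eq_zero_or_pos (dX X hX v) with h | h
  · exact absurd (by simpa [h] using d_spec X hX v) hv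
  · exact h

lemma d_succ {v : Fin (m+2)} (hv : v ∉ X) : dX X hX (v + 1) + 1 = dX X hX v := by
  have hpos := d_pos X hX hv
  have key : ∀ s : ℕ, v + 1 + (s : Fin (m+2)) = v + ((s + 1 : ℕ) : Fin (m+2)) := by
    intro s; push_cast; ring
  have h1 : dX X hX (v + 1) = dX X hX v - 1 := by
    rw [dX, Nat.find_eq_iff]
    constructor
    · rw [key]
      have : dX X hX v - 1 + 1 = dX X hX v := by omega
      rw [this]; exact d_spec X hX v
    · intro s hs
      rw [key]
      exact d_min X hX (by omega)
  omega

/-- the first element of `X` hit when walking forward from `v`. -/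
noncomputable def gX (v : Fin (m+2)) : Fin (m+2) := v + ((dX X hX v : ℕ) : Fin (m+2))

lemma gX_mem (v : Fin (m+2)) : gX X hX v ∈ X := d_spec X hX v

lemma gX_succ {v : Fin (m+2)} (hv : v ∉ X) : gX X hX (v + 1) = gX X hX v := by
  have h := d_succ X hX hv
  rw [gX, gX, ← h]
  push_cast
  ring

lemma gX_adj {a b : Fin (m+2)} (ha : a ∉ X) (hb : b ∉ X)
    (hadj : (cycleGraph (m+2)).Adj a b) : gX X hX a = gX X hX b := by
  rw [cycleGraph_adj] at hadj
  rcases hadj with h | h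
  · have : a = b + 1 := by rw [← h]; ring
    rw [this, gX_succ X hX hb]
  · have : b = a + 1 := by rw [← h]; ring
    rw [this, gX_succ X hX ha]

lemma reach_end : ∀ (k : ℕ) (v : Fin (m+2)) (hv : v ∉ X)
    (hd : dX X hX v = k + 1) (hk : v + (k : Fin (m+2)) ∉ X),
    ((cycleGraph (m+2)).delVerts X).Reachable ⟨v, hv⟩ ⟨v + (k : Fin (m+2)), hk⟩ := by
  intro k
  induction k with
  | zero => intro v hv hd hk; simp only [Nat.cast_zero, add_zero]; exact Reachable.refl _
  | succ k ih =>
    intro v hv hd hk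
    have h1 : v + ((1:ℕ) : Fin (m+2)) ∉ X := d_min X hX (by omega)
    rw [Nat.cast_one] at h1
    have hadj : ((cycleGraph (m+2)).delVerts X).Adj ⟨v, hv⟩ ⟨v + 1, h1⟩ := by
      show (cycleGraph (m+2)).Adj v (v + 1)
      rw [cycleGraph_adj]
      exact Or.inr (by ring)
    have hd1 : dX X hX (v + 1) = k + 1 := by have := d_succ X hX hv; omega
    have hk1 : v + 1 + (k : Fin (m+2)) ∉ X := by
      have : v + 1 + (k : Fin (m+2)) = v + ((k+1 : ℕ) : Fin (m+2)) := by push_cast; ring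
      rw [this]; exact hk
    have hr := ih (v + 1) h1 hd1 hk1
    have heq : (⟨v + 1 + (k : Fin (m+2)), hk1⟩ : {x : Fin (m+2) // x ∉ X}) =
        ⟨v + ((k+1 : ℕ) : Fin (m+2)), hk⟩ := by
      apply Subtype.ext; push_cast; ring
    rw [heq] at hr
    exact hadj.reachable.trans hr

lemma omega_le_card_cut (hX : X.Nonempty) :
    ((cycleGraph (m+2)).delVerts X).omegaComp ≤ X.card := by
  classical
  set H := (cycleGraph (m+2)).delVerts X with hH
  have hadjinv : ∀ (a b : {x : Fin (m+2) // x ∉ X}) (p : H.Walk a b), p.IsPath →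
      (⟨gX X hX a.1, gX_mem X hX a.1⟩ : {x // x ∈ X}) = ⟨gX X hX b.1, gX_mem X hX b.1⟩ := by
    intro a b p hp
    clear hp
    induction p with
    | nil => rfl
    | @cons a u b h p ih =>
      refine Eq.trans ?_ ih
      exact Subtype.ext (gX_adj X hX a.prop u.prop h)
  set F : H.ConnectedComponent → {x // x ∈ X} :=
    ConnectedComponent.lift (fun a => ⟨gX X hX a.1, gX_mem X hX a.1⟩) hadjinv with hF
  have hFinj : Function.Injective F := by
    intro c1 c2
    refine ConnectedComponent.ind₂ (fun a b hab => ?_) c1 c2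
    have hg : gX X hX a.1 = gX X hX b.1 := congrArg Subtype.val hab
    obtain ⟨ka, hka⟩ : ∃ ka, dX X hX a.1 = ka + 1 :=
      ⟨dX X hX a.1 - 1, by have := d_pos X hX a.prop; omega⟩
    obtain ⟨kb, hkb⟩ : ∃ kb, dX X hX b.1 = kb + 1 :=
      ⟨dX X hX b.1 - 1, by have := d_pos X hX b.prop; omega⟩
    have hma : a.1 + (ka : Fin (m+2)) ∉ X := d_min X hX (by omega)
    have hmb : b.1 + (kb : Fin (m+2)) ∉ X := d_min X hX (by omega)
    have hra := reach_end X hX ka a.1 a.prop hka hma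
    have hrb := reach_end X hX kb b.1 b.prop hkb hmb
    have hend : a.1 + (ka : Fin (m+2)) = b.1 + (kb : Fin (m+2)) := by
      have h1 : a.1 + (ka : Fin (m+2)) + 1 = gX X hX a.1 := by
        rw [gX, hka]; push_cast; ring
      have h2 : b.1 + (kb : Fin (m+2)) + 1 = gX X hX b.1 := by
        rw [gX, hkb]; push_cast; ring
      have := h1.trans (hg.trans h2.symm)
      exact add_right_cancel this
    have : (⟨a.1 + (ka : Fin (m+2)), hma⟩ : {x : Fin (m+2) // x ∉ X}) = ⟨b.1 + (kb : Fin (m+2)), hmb⟩ :=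
      Subtype.ext hend
    rw [this] at hra
    have : H.Reachable a b := hra.trans hrb.symm
    have h1 : a = (⟨a.1, a.prop⟩ : {x : Fin (m+2) // x ∉ X}) := rfl
    exact ConnectedComponent.sound this
  calc Nat.card H.ConnectedComponent ≤ Nat.card {x // x ∈ X} :=
        Nat.card_le_card_of_injective F hFinj
    _ = X.card := by rw [Nat.card_eq_fintype_card]; exact Fintype.card_coe X

end CycCut

namespace Expl

/-- mod-n helper: among same-parity vertices only `0` and `n-1` can differ by one. -/
lemma mod_eq_one_iff (n a b : ℕ) (hab : a % 2 = b % 2)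
    (han : a < n) (hbn : b < n) (hn : 2 ≤ n) :
    ((n - b) + a) % n = 1 ↔ (a = 0 ∧ b = n - 1) := by
  constructor
  · intro h
    have hdm := Nat.div_add_mod ((n - b) + a) n
    rw [h] at hdm
    rcases hq : ((n - b) + a) / n with _ | _ | q
    · rw [hq] at hdm; omega
    · rw [hq] at hdm; omega
    · rw [hq] at hdm
      have h2 : n * 2 ≤ n * (q + 2) := Nat.mul_le_mul_left n (by omega)
      generalize n * (q + 2) = r at hdm h2
      omega
  · rintro ⟨rfl, rfl⟩
    have : n - (n - 1) + 0 = 1 := by omega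
    rw [this]
    exact Nat.mod_eq_of_lt hn

lemma sub_val {n : ℕ} [NeZero n] (a b : Fin n) : (a - b).val = ((n - b.val) + a.val) % n := by
  rw [Fin.sub_def]

/-- vertices of equal parity are adjacent in the cycle iff they are `0` and `n-1`. -/
lemma cycle_adj_parity {n : ℕ} [NeZero n] (hn : 2 ≤ n) {a b : Fin n}
    (hab : a.val % 2 = b.val % 2) :
    (cycleGraph n).Adj a b ↔ ((a.val = 0 ∧ b.val = n - 1) ∨ (b.val = 0 ∧ a.val = n - 1)) := by
  rw [cycleGraph_adj', sub_val, sub_val,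
    mod_eq_one_iff n a.val b.val hab a.isLt b.isLt hn,
    mod_eq_one_iff n b.val a.val hab.symm b.isLt a.isLt hn]


section General

variable {W : Type*} {G : SimpleGraph W}

lemma reachable_eq_of_no_adj (h : ∀ a b : W, ¬ G.Adj a b) {a b : W}
    (hr : G.Reachable a b) : a = b := by
  obtain ⟨p⟩ := hr
  cases p with
  | nil => rfl
  | cons ha _ => exact absurd ha (h _ _)

/-- components of an edgeless graph biject with vertices. -/
noncomputable def compEquivOfNoAdj (h : ∀ a b : W, ¬ G.Adj a b) :
    G.ConnectedComponent ≃ W where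
  toFun := ConnectedComponent.lift id (fun v w p _ => by
    cases p with
    | nil => rfl
    | cons ha _ => exact absurd ha (h _ _))
  invFun := G.connectedComponentMk
  left_inv := ConnectedComponent.ind fun v => rfl
  right_inv := fun v => rfl

lemma tau_eq_one_of_no_adj [Finite W] [Nonempty W] (h : ∀ a b : W, ¬ G.Adj a b) :
    G.tauMax = 1 := by
  have hfib : (fun c : G.ConnectedComponent =>
      Nat.card {v : W // G.connectedComponentMk v = c}) = fun _ => 1 := by
    funext c
    refine ConnectedComponent.ind (fun v => ?_) c
    rw [Nat.card_eq_one_iff_unique]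
    refine ⟨⟨fun w1 w2 => Subtype.ext ?_⟩, ⟨v, rfl⟩⟩
    have e1 := reachable_eq_of_no_adj h (ConnectedComponent.exact w1.prop)
    have e2 := reachable_eq_of_no_adj h (ConnectedComponent.exact w2.prop)
    rw [e1, e2]
  have : Nonempty G.ConnectedComponent := ⟨G.connectedComponentMk (Classical.arbitrary W)⟩
  rw [SimpleGraph.tauMax, hfib, Set.range_const, csSup_singleton]

lemma card_compl_subtype {α : Type*} [Fintype α] (X : Finset α) :
    Nat.card {v : α // v ∉ X} = Fintype.card α - X.card := by
  classical
  rw [Nat.card_eq_fintype_card, Fintype.card_subtype_compl]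
  congr 1
  simp [Fintype.card_subtype]

end General

section EvenCut

def evenX (l : ℕ) : Finset (Fin (2*l)) :=
  Finset.image (fun i : Fin l => (⟨2*i.val, by omega⟩ : Fin (2*l))) Finset.univ

lemma mem_evenX {l : ℕ} (v : Fin (2*l)) : v ∈ evenX l ↔ v.val % 2 = 0 := by
  simp only [evenX, Finset.mem_image, Finset.mem_univ, true_and, Fin.ext_iff]
  constructor
  · rintro ⟨i, hi⟩; omega
  · intro h
    refine ⟨⟨v.val / 2, by omega⟩, ?_⟩
    simp only []
    omega

lemma card_evenX (l : ℕ) : (evenX l).card = l := by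
  rw [evenX, Finset.card_image_of_injective _ (fun i j h => by
    simpa [Fin.ext_iff] using h), Finset.card_univ, Fintype.card_fin]

lemma evenX_no_adj {l : ℕ} (hl : 2 ≤ l) (a b : {v : Fin (2*l) // v ∉ evenX l}) :
    ¬ ((cycleGraph (2*l)).delVerts (evenX l)).Adj a b := by
  have : NeZero (2*l) := ⟨by omega⟩
  intro h
  have ha : a.val.val % 2 = 1 := by have := (mem_evenX a.val).not.mp a.prop; omega
  have hb : b.val.val % 2 = 1 := by have := (mem_evenX b.val).not.mp b.prop; omega
  have h' : (cycleGraph (2*l)).Adj a.val b.val := h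
  rw [Expl.cycle_adj_parity (by omega) (by omega)] at h'
  omega

lemma evenX_omega {l : ℕ} (hl : 2 ≤ l) :
    ((cycleGraph (2*l)).delVerts (evenX l)).omegaComp = l := by
  rw [SimpleGraph.omegaComp,
    Nat.card_congr (compEquivOfNoAdj (fun a b => evenX_no_adj hl a b)),
    card_compl_subtype, card_evenX, Fintype.card_fin]
  omega

lemma evenX_tau {l : ℕ} (hl : 2 ≤ l) :
    ((cycleGraph (2*l)).delVerts (evenX l)).tauMax = 1 := by
  have hne : Nonempty {v : Fin (2*l) // v ∉ evenX l} :=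
    ⟨⟨⟨1, by omega⟩, by simp [mem_evenX]⟩⟩
  have : Finite {v : Fin (2*l) // v ∉ evenX l} := Subtype.finite
  exact tau_eq_one_of_no_adj (fun a b => evenX_no_adj hl a b)

end EvenCut

section OddCut

def oddX (l : ℕ) : Finset (Fin (2*l+1)) :=
  Finset.image (fun i : Fin l => (⟨2*i.val+1, by omega⟩ : Fin (2*l+1))) Finset.univ

lemma mem_oddX {l : ℕ} (v : Fin (2*l+1)) : v ∈ oddX l ↔ v.val % 2 = 1 := by
  simp only [oddX, Finset.mem_image, Finset.mem_univ, true_and, Fin.ext_iff]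
  constructor
  · rintro ⟨i, hi⟩; omega
  · intro h
    refine ⟨⟨v.val / 2, by omega⟩, ?_⟩
    simp only []
    omega

lemma card_oddX (l : ℕ) : (oddX l).card = l := by
  rw [oddX, Finset.card_image_of_injective _ (fun i j h => by
    simpa [Fin.ext_iff] using h), Finset.card_univ, Fintype.card_fin]

variable {l : ℕ}

/-- the two endpoints of the single remaining edge. -/
def oddA (l : ℕ) : {v : Fin (2*l+1) // v ∉ oddX l} :=
  ⟨⟨0, by omega⟩, by simp [mem_oddX]⟩

def oddB (l : ℕ) : {v : Fin (2*l+1) // v ∉ oddX l} :=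
  ⟨⟨2*l, by omega⟩, by simp [mem_oddX]⟩

lemma oddA_ne_oddB (hl : 2 ≤ l) : oddA l ≠ oddB l := by
  simp only [oddA, oddB, ne_eq, Subtype.ext_iff, Fin.ext_iff]
  omega

lemma oddX_adj_iff (hl : 2 ≤ l) (a b : {v : Fin (2*l+1) // v ∉ oddX l}) :
    ((cycleGraph (2*l+1)).delVerts (oddX l)).Adj a b ↔
      ((a = oddA l ∧ b = oddB l) ∨ (a = oddB l ∧ b = oddA l)) := by
  have ha : a.val.val % 2 = 0 := by have := (mem_oddX a.val).not.mp a.prop; omega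
  have hb : b.val.val % 2 = 0 := by have := (mem_oddX b.val).not.mp b.prop; omega
  have key : ((cycleGraph (2*l+1)).delVerts (oddX l)).Adj a b ↔
      (cycleGraph (2*l+1)).Adj a.val b.val := Iff.rfl
  rw [key, Expl.cycle_adj_parity (by omega) (by omega)]
  simp only [Subtype.ext_iff, Fin.ext_iff, oddA, oddB]
  omega

lemma oddX_reach (hl : 2 ≤ l) (a b : {v : Fin (2*l+1) // v ∉ oddX l})
    (h : ((cycleGraph (2*l+1)).delVerts (oddX l)).Reachable a b) :
    a = b ∨ (a = oddA l ∧ b = oddB l) ∨ (a = oddB l ∧ b = oddA l) := by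
  obtain ⟨p⟩ := h
  induction p with
  | nil => exact Or.inl rfl
  | @cons u v w h p ih =>
    rw [oddX_adj_iff hl] at h
    rcases ih with rfl | ⟨rfl, rfl⟩ | ⟨rfl, rfl⟩ <;>
      rcases h with ⟨rfl, h2⟩ | ⟨rfl, h2⟩ <;>
      simp_all [oddA_ne_oddB hl, (oddA_ne_oddB hl).symm] <;> tauto

lemma oddX_reach_AB (hl : 2 ≤ l) :
    ((cycleGraph (2*l+1)).delVerts (oddX l)).Reachable (oddA l) (oddB l) :=
  (( (oddX_adj_iff hl (oddA l) (oddB l)).mpr (Or.inl ⟨rfl, rfl⟩) )).reachable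

noncomputable def oddCompEquiv (hl : 2 ≤ l) :
    ((cycleGraph (2*l+1)).delVerts (oddX l)).ConnectedComponent ≃
      {v : {v : Fin (2*l+1) // v ∉ oddX l} // v ≠ oddB l} := by
  classical
  refine
  { toFun := ConnectedComponent.lift
      (fun v => if h : v = oddB l then ⟨oddA l, oddA_ne_oddB hl⟩ else ⟨v, h⟩)
      (fun v w p hp => ?_)
    invFun := fun v => SimpleGraph.connectedComponentMk _ v.val
    left_inv := ?_
    right_inv := ?_ }
  · clear hp
    induction p with
    | nil => rfl
    | @cons u v w h p ih =>
      refine Eq.trans ?_ ih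
      rw [oddX_adj_iff hl] at h
      rcases h with ⟨rfl, rfl⟩ | ⟨rfl, rfl⟩ <;>
        simp [oddA_ne_oddB hl]
  · refine ConnectedComponent.ind (fun v => ?_)
    by_cases h : v = oddB l
    · subst h
      simp only [ConnectedComponent.lift_mk, dif_pos rfl]
      exact ConnectedComponent.sound (oddX_reach_AB hl)
    · simp [h]
  · rintro ⟨v, hv⟩
    simp [hv]

lemma oddX_omega (hl : 2 ≤ l) :
    ((cycleGraph (2*l+1)).delVerts (oddX l)).omegaComp = l := by
  classical
  rw [SimpleGraph.omegaComp, Nat.card_congr (oddCompEquiv hl), Nat.card_eq_fintype_card,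
    Fintype.card_subtype_compl, Fintype.card_subtype_eq]
  have : Fintype.card {v : Fin (2*l+1) // v ∉ oddX l} = l + 1 := by
    rw [← Nat.card_eq_fintype_card, card_compl_subtype, card_oddX, Fintype.card_fin]
    omega
  omega

lemma oddX_fiber_le (hl : 2 ≤ l)
    (c : ((cycleGraph (2*l+1)).delVerts (oddX l)).ConnectedComponent) :
    Nat.card {w // SimpleGraph.connectedComponentMk _ w = c} ≤ 2 := by
  classical
  refine ConnectedComponent.ind (fun v => ?_) c
  have hsub : {w | SimpleGraph.connectedComponentMk _ w = SimpleGraph.connectedComponentMk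
      ((cycleGraph (2*l+1)).delVerts (oddX l)) v} ⊆ {v, oddA l, oddB l} := by
    intro w hw
    have := oddX_reach hl w v (ConnectedComponent.exact hw)
    rcases this with rfl | ⟨rfl, rfl⟩ | ⟨rfl, rfl⟩ <;> simp
  by_cases hA : v = oddA l
  · subst hA
    have hsub2 : {w | SimpleGraph.connectedComponentMk _ w = SimpleGraph.connectedComponentMk
        ((cycleGraph (2*l+1)).delVerts (oddX l)) (oddA l)} ⊆ {oddA l, oddB l} := by
      intro w hw
      rcases oddX_reach hl w (oddA l) (ConnectedComponent.exact hw) with rfl | ⟨rfl, h2⟩ |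
        ⟨rfl, h2⟩ <;> simp
    calc Nat.card {w // SimpleGraph.connectedComponentMk _ w = SimpleGraph.connectedComponentMk
          ((cycleGraph (2*l+1)).delVerts (oddX l)) (oddA l)}
        = ({w | SimpleGraph.connectedComponentMk _ w = SimpleGraph.connectedComponentMk
          ((cycleGraph (2*l+1)).delVerts (oddX l)) (oddA l)} : Set _).ncard :=
          Nat.card_coe_set_eq _
      _ ≤ ({oddA l, oddB l} : Set _).ncard := Set.ncard_le_ncard hsub2 (Set.toFinite _)
      _ ≤ 2 := by rw [Set.ncard_pair (oddA_ne_oddB hl)]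
  · by_cases hB : v = oddB l
    · subst hB
      have hsub2 : {w | SimpleGraph.connectedComponentMk _ w = SimpleGraph.connectedComponentMk
          ((cycleGraph (2*l+1)).delVerts (oddX l)) (oddB l)} ⊆ {oddA l, oddB l} := by
        intro w hw
        rcases oddX_reach hl w (oddB l) (ConnectedComponent.exact hw) with rfl | ⟨rfl, h2⟩ |
          ⟨rfl, h2⟩ <;> simp
      calc Nat.card {w // SimpleGraph.connectedComponentMk _ w = SimpleGraph.connectedComponentMk
            ((cycleGraph (2*l+1)).delVerts (oddX l)) (oddB l)}
          = ({w | SimpleGraph.connectedComponentMk _ w = SimpleGraph.connectedComponentMk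
            ((cycleGraph (2*l+1)).delVerts (oddX l)) (oddB l)} : Set _).ncard :=
            Nat.card_coe_set_eq _
        _ ≤ ({oddA l, oddB l} : Set _).ncard := Set.ncard_le_ncard hsub2 (Set.toFinite _)
        _ ≤ 2 := by rw [Set.ncard_pair (oddA_ne_oddB hl)]
    · have hsub2 : {w | SimpleGraph.connectedComponentMk _ w = SimpleGraph.connectedComponentMk
          ((cycleGraph (2*l+1)).delVerts (oddX l)) v} ⊆ {v} := by
        intro w hw
        rcases oddX_reach hl w v (ConnectedComponent.exact hw) with rfl | ⟨rfl, rfl⟩ |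
          ⟨rfl, rfl⟩ <;> simp_all
      calc Nat.card {w // SimpleGraph.connectedComponentMk _ w = SimpleGraph.connectedComponentMk
            ((cycleGraph (2*l+1)).delVerts (oddX l)) v}
          = ({w | SimpleGraph.connectedComponentMk _ w = SimpleGraph.connectedComponentMk
            ((cycleGraph (2*l+1)).delVerts (oddX l)) v} : Set _).ncard :=
            Nat.card_coe_set_eq _
        _ ≤ ({v} : Set _).ncard := Set.ncard_le_ncard hsub2 (Set.toFinite _)
        _ ≤ 2 := by rw [Set.ncard_singleton]; omega

lemma oddX_fiber_A (hl : 2 ≤ l) :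
    Nat.card {w // SimpleGraph.connectedComponentMk _ w = SimpleGraph.connectedComponentMk
      ((cycleGraph (2*l+1)).delVerts (oddX l)) (oddA l)} = 2 := by
  have hset : {w | SimpleGraph.connectedComponentMk _ w = SimpleGraph.connectedComponentMk
      ((cycleGraph (2*l+1)).delVerts (oddX l)) (oddA l)} = {oddA l, oddB l} := by
    ext w
    simp only [Set.mem_setOf_eq, Set.mem_insert_iff, Set.mem_singleton_iff]
    constructor
    · intro hw
      rcases oddX_reach hl w (oddA l) (ConnectedComponent.exact hw) with rfl | ⟨rfl, h2⟩ |
        ⟨rfl, h2⟩ <;> simp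
    · rintro (rfl | rfl)
      · rfl
      · exact (ConnectedComponent.sound (oddX_reach_AB hl)).symm
  calc Nat.card {w // SimpleGraph.connectedComponentMk _ w = SimpleGraph.connectedComponentMk
        ((cycleGraph (2*l+1)).delVerts (oddX l)) (oddA l)}
      = ({w | SimpleGraph.connectedComponentMk _ w = SimpleGraph.connectedComponentMk
        ((cycleGraph (2*l+1)).delVerts (oddX l)) (oddA l)} : Set _).ncard :=
        Nat.card_coe_set_eq _
    _ = 2 := by rw [hset, Set.ncard_pair (oddA_ne_oddB hl)]

lemma oddX_tau (hl : 2 ≤ l) :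
    ((cycleGraph (2*l+1)).delVerts (oddX l)).tauMax = 2 := by
  have hbdd : BddAbove (Set.range fun c : ((cycleGraph (2*l+1)).delVerts
      (oddX l)).ConnectedComponent =>
      Nat.card {w // SimpleGraph.connectedComponentMk _ w = c}) := by
    refine ⟨2, ?_⟩
    rintro x ⟨c, rfl⟩
    exact oddX_fiber_le hl c
  refine le_antisymm ?_ ?_
  · refine csSup_le ⟨_, Set.mem_range_self (SimpleGraph.connectedComponentMk _ (oddA l))⟩ ?_
    rintro x ⟨c, rfl⟩
    exact oddX_fiber_le hl c
  · refine le_csSup hbdd ?_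
    exact ⟨_, oddX_fiber_A hl⟩

end OddCut

end Expl

lemma cycle_lb (n : ℕ) (hn : 4 ≤ n) (X : Finset (Fin n))
    (hcut : (cycleGraph n).IsVertexCut X) :
    (if Odd n then ((n : ℝ) + 3) / ((n : ℝ) - 1) else ((n : ℝ) + 2) / n) ≤
      ((X.card : ℝ) + ((cycleGraph n).delVerts X).tauMax) /
        ((cycleGraph n).delVerts X).omegaComp := by
  obtain ⟨m, rfl⟩ : ∃ m, n = m + 2 := ⟨n - 2, by omega⟩
  set H := (cycleGraph (m+2)).delVerts X with hH
  have hfin : Finite {v : Fin (m+2) // v ∉ X} := Subtype.finite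
  set w := H.omegaComp with hw
  set t := H.tauMax with ht
  set k := X.card with hk
  have hw2 : 2 ≤ w := hcut
  have hXne : X.Nonempty := by
    rw [Finset.nonempty_iff_ne_empty]
    rintro rfl
    have hiso : H ≃g cycleGraph (m+2) :=
      ⟨Equiv.subtypeUnivEquiv (fun v => Finset.notMem_empty v), Iff.rfl⟩
    have hpre : H.Preconnected := hiso.preconnected_iff.mpr cycleGraph_preconnected
    have hsub := hpre.subsingleton_connectedComponent
    have h1 : w = 1 :=
      Nat.card_of_subsingleton (H.connectedComponentMk ⟨0, Finset.notMem_empty _⟩)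
    omega
  have hwk : w ≤ k := CycCut.omega_le_card_cut X hXne
  have hN : Nat.card {v : Fin (m+2) // v ∉ X} = (m+2) - k := by
    rw [Expl.card_compl_subtype, Fintype.card_fin]
  have hkn : k ≤ m + 2 := by
    calc k ≤ (Finset.univ : Finset (Fin (m+2))).card := Finset.card_le_univ X
    _ = m + 2 := by simp
  have hwN : w ≤ (m+2) - k := hN ▸ omega_le_card H
  have hNwt : (m+2) - k ≤ w * t := hN ▸ card_le_omega_mul_tau H
  have hNwtZ : ((m:ℤ)+2) - (k:ℤ) ≤ (w:ℤ) * (t:ℤ) := by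
    have h3 : (((m+2) - k : ℕ) : ℤ) ≤ ((w * t : ℕ) : ℤ) := Int.ofNat_le.mpr hNwt
    rw [Nat.cast_sub hkn, Nat.cast_mul] at h3
    push_cast at h3 ⊢
    linarith
  have hw0 : (0:ℝ) < (w:ℝ) := by exact_mod_cast Nat.lt_of_lt_of_le Nat.zero_lt_two hw2
  rcases Nat.even_or_odd (m+2) with he | ho
  · rw [if_neg (by simpa using he)]
    rw [div_le_div_iff₀ (by push_cast; linarith) hw0]
    have hZ := arith_even ((m:ℤ)+2) k w t (by omega) (by omega) (by omega)
      (by omega) hNwtZ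
    have hR : (((m:ℝ)+2)+2) * w ≤ ((m:ℝ)+2) * ((k:ℝ)+(t:ℝ)) := by exact_mod_cast hZ
    push_cast
    linarith
  · rw [if_pos ho]
    have h5 : 5 ≤ m + 2 := by
      rcases ho with ⟨j, hj⟩; omega
    have hoZ : Odd ((m:ℤ)+2) := by
      obtain ⟨j, hj⟩ := ho
      exact ⟨(j:ℤ), by omega⟩
    rw [div_le_div_iff₀ (by push_cast; linarith) hw0]
    rcases Nat.lt_or_ge t 2 with ht2 | ht2
    · interval_cases t
      · simp only [Nat.mul_zero] at hNwt
        omega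
      · have hEq : Nat.card {v : Fin (m+2) // v ∉ X} = w :=
          card_eq_omega_of_tau_le_one H (by omega)
        rw [hN] at hEq
        have hZ := arith_oddB ((m:ℤ)+2) k w (by omega) (by omega) (by omega)
          (by omega) hoZ
        have hR : (((m:ℝ)+2)+3) * w ≤ (((m:ℝ)+2)-1) * ((k:ℝ)+1) := by exact_mod_cast hZ
        push_cast
        linarith
    · have hZ := arith_oddA ((m:ℤ)+2) k w t (by omega) hoZ (by omega) (by omega)
        (by omega) hNwtZ (by omega)
      have hR : (((m:ℝ)+2)+3) * w ≤ (((m:ℝ)+2)-1) * ((k:ℝ)+(t:ℝ)) := by exact_mod_cast hZ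
      push_cast
      linarith

theorem tenacity_cycleGraph (n : ℕ) (hn : 4 ≤ n) :
    (SimpleGraph.cycleGraph n).tenacity =
      if Odd n then ((n : ℝ) + 3) / ((n : ℝ) - 1) else ((n : ℝ) + 2) / n := by
  rw [SimpleGraph.tenacity]
  have hlb : ∀ s ∈ { t : ℝ | ∃ X : Finset (Fin n), (cycleGraph n).IsVertexCut X ∧
      t = ((X.card : ℝ) + ((cycleGraph n).delVerts X).tauMax) /
        ((cycleGraph n).delVerts X).omegaComp },
      (if Odd n then ((n : ℝ) + 3) / ((n : ℝ) - 1) else ((n : ℝ) + 2) / n) ≤ s := by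
    rintro s ⟨X, hcut, rfl⟩
    exact cycle_lb n hn X hcut
  have hmem : (if Odd n then ((n : ℝ) + 3) / ((n : ℝ) - 1) else ((n : ℝ) + 2) / n) ∈
      { t : ℝ | ∃ X : Finset (Fin n), (cycleGraph n).IsVertexCut X ∧
      t = ((X.card : ℝ) + ((cycleGraph n).delVerts X).tauMax) /
        ((cycleGraph n).delVerts X).omegaComp } := by
    rcases Nat.even_or_odd n with he | ho
    · obtain ⟨l, rfl⟩ : ∃ l, n = 2 * l := ⟨n/2, by obtain ⟨r, hr⟩ := he; omega⟩
      have hl : 2 ≤ l := by omega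
      refine ⟨Expl.evenX l, ?_, ?_⟩
      · show 1 < _
        rw [Expl.evenX_omega hl]
        omega
      · rw [if_neg (by rw [Nat.odd_iff]; omega), Expl.card_evenX,
          Expl.evenX_omega hl, Expl.evenX_tau hl]
        have hl0 : (l:ℝ) ≠ 0 := Nat.cast_ne_zero.mpr (by omega)
        push_cast
        rw [div_eq_div_iff (by positivity) (by positivity)]
        ring
    · obtain ⟨l, rfl⟩ : ∃ l, n = 2 * l + 1 := ⟨n/2, by obtain ⟨r, hr⟩ := ho; omega⟩
      have hl : 2 ≤ l := by omega
      refine ⟨Expl.oddX l, ?_, ?_⟩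
      · show 1 < _
        rw [Expl.oddX_omega hl]
        omega
      · rw [if_pos (by rw [Nat.odd_iff]; omega), Expl.card_oddX,
          Expl.oddX_omega hl, Expl.oddX_tau hl]
        have hl0 : (l:ℝ) ≠ 0 := Nat.cast_ne_zero.mpr (by omega)
        have hl1 : (0:ℝ) < (l:ℝ) := by positivity
        push_cast
        rw [div_eq_div_iff (by linarith) (by positivity)]
        ring
  exact le_antisymm (csInf_le ⟨_, hlb⟩ hmem) (le_csInf ⟨_, hmem⟩ hlb)
end Counting
end

section
/- If G is a noncomplete connected graph and H is a connected spanning subgraph of G, then T(H) ≤ T(G). -/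
open SimpleGraph

lemma omega_mono' {W : Type*} [Finite W] {H G : SimpleGraph W} (h : H ≤ G) :
    G.omegaComp ≤ H.omegaComp := by
  have hsurj : Function.Surjective
      (ConnectedComponent.map (SimpleGraph.Hom.ofLE h)) := by
    intro c
    refine ConnectedComponent.ind (fun v => ?_) c
    exact ⟨H.connectedComponentMk v, rfl⟩
  exact Nat.card_le_card_of_surjective _ hsurj

lemma tau_mono' {W : Type*} [Finite W] {H G : SimpleGraph W} (h : H ≤ G) :
    H.tauMax ≤ G.tauMax := by
  classical
  unfold SimpleGraph.tauMax
  rcases isEmpty_or_nonempty H.ConnectedComponent with he | hne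
  · rw [Set.range_eq_empty, csSup_empty]
    exact Nat.zero_le _
  · apply csSup_le (Set.range_nonempty _)
    rintro n ⟨c, rfl⟩
    set f := SimpleGraph.Hom.ofLE h with hf
    have hsub : Nat.card {v : W // H.connectedComponentMk v = c}
        ≤ Nat.card {v : W // G.connectedComponentMk v = c.map f} := by
      apply Nat.card_le_card_of_injective
        (fun x => (⟨x.1, by
          obtain ⟨v, hv⟩ := x
          simp only []
          rw [← hv, ConnectedComponent.map_mk]
          rfl⟩ : {v : W // G.connectedComponentMk v = c.map f}))
      intro a b hab
      have h2 := congrArg Subtype.val hab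
      exact Subtype.ext h2
    refine hsub.trans (le_csSup ((Set.finite_range _).bddAbove) ⟨c.map f, rfl⟩)

lemma delVerts_mono {V : Type*} {H G : SimpleGraph V} (h : H ≤ G) (X : Finset V) :
    H.delVerts X ≤ G.delVerts X := fun _ _ hadj => h hadj

theorem tenacity_mono_spanning_subgraph {V : Type*} [Fintype V]
    (G H : SimpleGraph V) (hGc : G.Connected) (hGnc : G ≠ ⊤)
    (hHc : H.Connected) (hle : H ≤ G) :
    H.tenacity ≤ G.tenacity := by
  classical
  -- G has a vertex cut
  have hlt : ¬ (⊤ : SimpleGraph V) ≤ G := fun hc => hGnc (le_antisymm le_top hc)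
  obtain ⟨u, v, huvne, hnadj⟩ : ∃ u v : V, u ≠ v ∧ ¬ G.Adj u v := by
    by_contra hc
    push_neg at hc
    exact hlt fun a b hab => hc a b hab.ne
  set X : Finset V := Finset.univ.filter (fun w => w ≠ u ∧ w ≠ v) with hX
  have hmemX : ∀ w : V, w ∉ X ↔ (w = u ∨ w = v) := by
    intro w
    simp only [hX, Finset.mem_filter, Finset.mem_univ, true_and, not_and_or, not_not]
  have hcut : G.IsVertexCut X := by
    have hedgeless : ∀ a b : {w : V // w ∉ X}, ¬ (G.delVerts X).Adj a b := by
      rintro ⟨a, ha⟩ ⟨b, hb⟩ hadj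
      rw [hmemX] at ha hb
      have : G.Adj a b := hadj
      rcases ha with rfl | rfl <;> rcases hb with rfl | rfl
      · exact this.ne rfl
      · exact hnadj this
      · exact hnadj this.symm
      · exact this.ne rfl
    have hux : u ∉ X := (hmemX u).mpr (Or.inl rfl)
    have hvx : v ∉ X := (hmemX v).mpr (Or.inr rfl)
    have hbot : G.delVerts X = ⊥ := by
      ext a b
      simp only [SimpleGraph.bot_adj, iff_false]
      exact hedgeless a b
    have hne : (G.delVerts X).connectedComponentMk ⟨u, hux⟩ ≠
        (G.delVerts X).connectedComponentMk ⟨v, hvx⟩ := by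
      intro hc
      rw [ConnectedComponent.eq, hbot, SimpleGraph.reachable_bot] at hc
      exact huvne (congrArg Subtype.val hc)
    rw [SimpleGraph.IsVertexCut, SimpleGraph.omegaComp,
      Finite.one_lt_card_iff_nontrivial]
    exact ⟨_, _, hne⟩
  -- nonemptiness of G's tenacity set
  have hGne : { t : ℝ | ∃ X : Finset V, G.IsVertexCut X ∧
      t = ((X.card : ℝ) + (G.delVerts X).tauMax) / (G.delVerts X).omegaComp }.Nonempty :=
    ⟨_, X, hcut, rfl⟩
  -- bddBelow of H's tenacity set
  have hbdd : BddBelow { t : ℝ | ∃ X : Finset V, H.IsVertexCut X ∧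
      t = ((X.card : ℝ) + (H.delVerts X).tauMax) / (H.delVerts X).omegaComp } := by
    refine ⟨0, ?_⟩
    rintro t ⟨Y, hY, rfl⟩
    positivity
  apply le_csInf hGne
  rintro t ⟨Y, hY, rfl⟩
  have hωle : (G.delVerts Y).omegaComp ≤ (H.delVerts Y).omegaComp :=
    omega_mono' (delVerts_mono hle Y)
  have hτle : (H.delVerts Y).tauMax ≤ (G.delVerts Y).tauMax :=
    tau_mono' (delVerts_mono hle Y)
  have hYcutH : H.IsVertexCut Y := lt_of_lt_of_le hY hωle
  have hstep : ((Y.card : ℝ) + (H.delVerts Y).tauMax) / (H.delVerts Y).omegaComp ≤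
      ((Y.card : ℝ) + (G.delVerts Y).tauMax) / (G.delVerts Y).omegaComp := by
    apply div_le_div₀
    · positivity
    · exact add_le_add_right (Nat.cast_le.mpr hτle) _
    · exact_mod_cast lt_trans Nat.zero_lt_one hY
    · exact_mod_cast hωle
  exact le_trans (csInf_le hbdd ⟨Y, hYcutH, rfl⟩) hstep
end

section
/- Let G be a connected graph. If there exists a vertex cut X₀ of G such that G−X₀ is a forest and ω(G−X₀) ≥ |X₀| + 2, then T(G) ≤ 1. -/
open SimpleGraph

namespace SimpleGraph

variable {V : Type*}

/-- The inclusion homomorphism from `G.delVerts X` to `G`. -/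
def delVertsHom (G : SimpleGraph V) (X : Finset V) : G.delVerts X →g G :=
  ⟨Subtype.val, fun h => h⟩

lemma delVertsHom_injective (G : SimpleGraph V) (X : Finset V) :
    Function.Injective (G.delVertsHom X) := Subtype.val_injective

lemma IsAcyclic.delVerts_acyclic {G : SimpleGraph V} (h : G.IsAcyclic) (X : Finset V) :
    (G.delVerts X).IsAcyclic := by
  intro v c hc
  exact h (c.map (G.delVertsHom X))
    ((Walk.map_isCycle_iff_of_injective (G.delVertsHom_injective X)).mpr hc)

lemma omegaComp_eq_of_iso {W W' : Type*} {A : SimpleGraph W} {B : SimpleGraph W'}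
    (e : A ≃g B) : A.omegaComp = B.omegaComp :=
  Nat.card_congr e.connectedComponentEquiv

lemma tauMax_eq_of_iso {W W' : Type*} {A : SimpleGraph W} {B : SimpleGraph W'}
    (e : A ≃g B) : A.tauMax = B.tauMax := by
  unfold tauMax
  have h1 : (fun c : A.ConnectedComponent => Nat.card {v // A.connectedComponentMk v = c})
      = (fun c : B.ConnectedComponent => Nat.card {v // B.connectedComponentMk v = c})
        ∘ e.connectedComponentEquiv := by
    funext c
    exact Nat.card_congr (ConnectedComponent.isoEquivSupp e c)
  rw [h1, Function.Surjective.range_comp e.connectedComponentEquiv.surjective]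

/-- Deleting `X ∪ Y` at once is the same as deleting `X` then `Y`. -/
def delVertsUnionIso (G : SimpleGraph V) [DecidableEq V] (X : Finset V)
    (Y : Finset {v : V // v ∉ X}) :
    G.delVerts (X ∪ Y.image Subtype.val) ≃g (G.delVerts X).delVerts Y where
  toEquiv :=
    { toFun := fun v => ⟨⟨v.1, fun h => v.2 (Finset.mem_union_left _ h)⟩,
        fun h => v.2 (Finset.mem_union_right _ (Finset.mem_image_of_mem _ h))⟩
      invFun := fun v => ⟨v.1.1, by
        simp only [Finset.mem_union, Finset.mem_image, not_or, not_exists]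
        refine ⟨v.1.2, ?_⟩
        rintro ⟨w, hw⟩ ⟨hmem, heq⟩
        exact v.2 (by rwa [show v.1 = ⟨w, hw⟩ from Subtype.ext heq.symm])⟩
      left_inv := fun v => rfl
      right_inv := fun v => rfl }
  map_rel_iff' := Iff.rfl

lemma tauMax_le {W : Type*} {H : SimpleGraph W} {n : ℕ}
    (h : ∀ c : H.ConnectedComponent, Nat.card {v // H.connectedComponentMk v = c} ≤ n) :
    H.tauMax ≤ n :=
  csSup_le' (by rintro x ⟨c, rfl⟩; exact h c)

end SimpleGraph

namespace SimpleGraph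

variable {V : Type*}

/-- Removing a vertex with two distinct neighbors from a forest increases
the number of components. -/
lemma omega_succ_le_delVerts {W : Type*} [Finite W] {H : SimpleGraph W}
    (hH : H.IsAcyclic) {v u₁ u₂ : W} (h1 : H.Adj v u₁) (h2 : H.Adj v u₂)
    (hne : u₁ ≠ u₂) :
    H.omegaComp + 1 ≤ (H.delVerts {v}).omegaComp := by
  classical
  set f : (H.delVerts {v}).ConnectedComponent → H.ConnectedComponent :=
    ConnectedComponent.map (H.delVertsHom {v}) with hf
  have hu₁ : u₁ ∉ ({v} : Finset W) := by simp [h1.ne']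
  have hu₂ : u₂ ∉ ({v} : Finset W) := by simp [h2.ne']
  have hsurj : Function.Surjective f := by
    intro c
    induction c using ConnectedComponent.ind with
    | _ w =>
      by_cases hw : w = v
      · refine ⟨(H.delVerts {v}).connectedComponentMk ⟨u₁, hu₁⟩, ?_⟩
        subst hw
        exact ConnectedComponent.sound h1.symm.reachable
      · exact ⟨(H.delVerts {v}).connectedComponentMk ⟨w, by simp [hw]⟩, rfl⟩
  have hninj : ¬ Function.Injective f := by
    intro hinj
    have hcc : (H.delVerts {v}).connectedComponentMk ⟨u₁, hu₁⟩
        = (H.delVerts {v}).connectedComponentMk ⟨u₂, hu₂⟩ := by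
      apply hinj
      exact ConnectedComponent.sound (h1.symm.reachable.trans h2.reachable)
    obtain ⟨p0⟩ := ConnectedComponent.eq.mp hcc
    set q : H.Walk u₁ u₂ := p0.toPath.val.map (H.delVertsHom {v}) with hq
    have hqpath : q.IsPath :=
      Walk.map_isPath_of_injective (H.delVertsHom_injective {v}) p0.toPath.prop
    have hvq : v ∉ q.support := by
      rw [hq]; erw [Walk.support_map]
      intro hmem
      obtain ⟨⟨x, hx⟩, -, heq⟩ := List.mem_map.mp hmem
      exact hx (Finset.mem_singleton.mpr heq)
    have hP2 : (Walk.cons h1 q).IsPath := by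
      rw [Walk.cons_isPath_iff]; exact ⟨hqpath, hvq⟩
    have hP1 : (Walk.cons h2 Walk.nil).IsPath := by
      simp [Walk.cons_isPath_iff, h2.ne]
    have heqp := isAcyclic_iff_path_unique.mp hH ⟨Walk.cons h1 q, hP2⟩ ⟨Walk.cons h2 Walk.nil, hP1⟩
    have hlen := congrArg (fun p : H.Path v u₂ => p.val.length) heqp
    simp only [Walk.length_cons, Walk.length_nil] at hlen
    have hq0 : q.length = 0 := by omega
    exact hne (Walk.eq_of_length_eq_zero hq0)
  have hle := Nat.card_le_card_of_surjective f hsurj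
  rcases lt_or_eq_of_le hle with hlt | heq
  · unfold omegaComp; omega
  · exact absurd ((Nat.bijective_iff_surjective_and_card f).mpr ⟨hsurj, heq.symm⟩).injective hninj

end SimpleGraph

namespace SimpleGraph

lemma path_adj_or_triple {W : Type*} {H : SimpleGraph W} {x y : W}
    (p : H.Walk x y) (hp : p.IsPath) (hxy : x ≠ y) :
    H.Adj x y ∨ ∃ v u₁ u₂ : W, u₁ ≠ u₂ ∧ H.Adj v u₁ ∧ H.Adj v u₂ := by
  cases p with
  | nil => exact absurd rfl hxy
  | cons h r =>
    cases r with
    | nil => exact Or.inl h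
    | @cons m z _ h' r =>
      right
      obtain ⟨hp', hx⟩ := (Walk.cons_isPath_iff _ _).mp hp
      refine ⟨_, x, z, ?_, h.symm, h'⟩
      intro hxz
      apply hx
      rw [Walk.support_cons, hxz]
      exact List.mem_cons_of_mem _ r.start_mem_support

lemma exists_triple_of_reachable {W : Type*} {H : SimpleGraph W} {a b c : W}
    (hab : a ≠ b) (hac : a ≠ c) (hbc : b ≠ c)
    (rab : H.Reachable a b) (rac : H.Reachable a c) :
    ∃ v u₁ u₂ : W, u₁ ≠ u₂ ∧ H.Adj v u₁ ∧ H.Adj v u₂ := by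
  classical
  obtain ⟨p⟩ := rab
  rcases path_adj_or_triple p.toPath.val p.toPath.prop hab with hadj1 | htr
  · obtain ⟨q⟩ := rac
    rcases path_adj_or_triple q.toPath.val q.toPath.prop hac with hadj2 | htr
    · exact ⟨a, b, c, hbc, hadj1, hadj2⟩
    · exact htr
  · exact htr

lemma exists_triple_of_card {W : Type*} [Finite W] {H : SimpleGraph W}
    {c : H.ConnectedComponent}
    (h : 3 ≤ Nat.card {v // H.connectedComponentMk v = c}) :
    ∃ v u₁ u₂ : W, u₁ ≠ u₂ ∧ H.Adj v u₁ ∧ H.Adj v u₂ := by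
  have : Fintype {v // H.connectedComponentMk v = c} := Fintype.ofFinite _
  rw [Nat.card_eq_fintype_card] at h
  obtain ⟨⟨a, ha⟩, ⟨b, hb⟩, ⟨d, hd⟩, h1, h2, h3⟩ := Fintype.two_lt_card_iff.mp h
  exact exists_triple_of_reachable
    (fun hh => h1 (Subtype.ext hh)) (fun hh => h2 (Subtype.ext hh))
    (fun hh => h3 (Subtype.ext hh))
    (ConnectedComponent.eq.mp (ha.trans hb.symm))
    (ConnectedComponent.eq.mp (ha.trans hd.symm))

lemma shatter_small {W : Type*} [Fintype W] (H : SimpleGraph W)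
    (hsmall : ∀ c : H.ConnectedComponent,
      Nat.card {v // H.connectedComponentMk v = c} ≤ 2) :
    ∃ S : Finset W, (H.delVerts S).tauMax ≤ 2 ∧
      S.card + H.omegaComp ≤ (H.delVerts S).omegaComp := by
  have e : H.delVerts ∅ ≃g H :=
    { toEquiv := Equiv.subtypeUnivEquiv (by simp), map_rel_iff' := Iff.rfl }
  exact ⟨∅, by rw [tauMax_eq_of_iso e]; exact tauMax_le hsmall,
    by rw [omegaComp_eq_of_iso e]; simp⟩

end SimpleGraph

namespace SimpleGraph

lemma forest_shatter (n : ℕ) :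
    ∀ {W : Type u} [Fintype W] (H : SimpleGraph W), Fintype.card W ≤ n →
      H.IsAcyclic →
      ∃ S : Finset W, (H.delVerts S).tauMax ≤ 2 ∧
        S.card + H.omegaComp ≤ (H.delVerts S).omegaComp := by
  induction n with
  | zero =>
    intro W _ H hcard _
    have : IsEmpty W := by
      rw [← Fintype.card_eq_zero_iff]; omega
    exact shatter_small H (fun c => by simp [Nat.card_of_isEmpty])
  | succ n ih =>
    intro W _ H hcard hH
    by_cases hsmall : ∀ c : H.ConnectedComponent,
        Nat.card {v // H.connectedComponentMk v = c} ≤ 2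
    · exact shatter_small H hsmall
    · push_neg at hsmall
      obtain ⟨c, hc⟩ := hsmall
      obtain ⟨v, u₁, u₂, hne, h1, h2⟩ := exists_triple_of_card (H := H) (c := c) (by omega)
      classical
      have hdel : Fintype.card {w // w ∉ ({v} : Finset W)} ≤ n := by
        have h' : Fintype.card {w // w ∉ ({v} : Finset W)} = Fintype.card W - 1 := by
          simp [Fintype.card_subtype_compl]
        have hpos : 0 < Fintype.card W := Fintype.card_pos_iff.mpr ⟨v⟩
        omega
      obtain ⟨S', hτ, hω⟩ := ih (H.delVerts {v}) hdel (hH.delVerts_acyclic {v})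
      have e := delVertsUnionIso H {v} S'
      have hdisj : Disjoint ({v} : Finset W) (S'.image Subtype.val) := by
        simp only [Finset.disjoint_left, Finset.mem_singleton, Finset.mem_image]
        rintro x rfl ⟨⟨w, hw⟩, hmem, heq⟩
        exact hw (Finset.mem_singleton.mpr heq)
      have hcardS : ({v} ∪ S'.image Subtype.val).card = S'.card + 1 := by
        rw [Finset.card_union_of_disjoint hdisj, Finset.card_singleton,
          Finset.card_image_of_injective _ Subtype.val_injective]
        omega
      refine ⟨{v} ∪ S'.image Subtype.val, ?_, ?_⟩
      · rw [tauMax_eq_of_iso e]; exact hτ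
      · rw [omegaComp_eq_of_iso e, hcardS]
        have := omega_succ_le_delVerts hH h1 h2 hne
        omega

end SimpleGraph

theorem tenacity_le_one_of_forest_cut {V : Type*} [Fintype V]
    (G : SimpleGraph V) (hG : G.Connected) (X₀ : Finset V)
    (hcut : G.IsVertexCut X₀) (hforest : (G.delVerts X₀).IsAcyclic)
    (hω : X₀.card + 2 ≤ (G.delVerts X₀).omegaComp) :
    G.tenacity ≤ 1 := by
  classical
  obtain ⟨S, hτ, hωS⟩ := SimpleGraph.forest_shatter (Fintype.card {v // v ∉ X₀})
    (G.delVerts X₀) le_rfl hforest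
  set X : Finset V := X₀ ∪ S.image Subtype.val with hX
  have e := SimpleGraph.delVertsUnionIso G X₀ S
  have hτ' : (G.delVerts X).tauMax ≤ 2 := by
    rw [hX, SimpleGraph.tauMax_eq_of_iso e]; exact hτ
  have hω' : X₀.card + S.card + 2 ≤ (G.delVerts X).omegaComp := by
    rw [hX, SimpleGraph.omegaComp_eq_of_iso e]; omega
  have hdisj : Disjoint X₀ (S.image Subtype.val) := by
    simp only [Finset.disjoint_left, Finset.mem_image]
    rintro x hx ⟨⟨w, hw⟩, hmem, rfl⟩
    exact hw hx
  have hXcard : X.card = X₀.card + S.card := by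
    rw [hX, Finset.card_union_of_disjoint hdisj,
      Finset.card_image_of_injective _ Subtype.val_injective]
  have hcut' : G.IsVertexCut X := by
    unfold SimpleGraph.IsVertexCut; omega
  have hnat : X.card + (G.delVerts X).tauMax ≤ (G.delVerts X).omegaComp := by omega
  have hpos : (0 : ℝ) < ((G.delVerts X).omegaComp : ℝ) := by
    have : 1 < (G.delVerts X).omegaComp := hcut'
    exact_mod_cast Nat.lt_of_lt_of_le Nat.zero_lt_one this.le
  have hbdd : BddBelow { t : ℝ | ∃ Y : Finset V, G.IsVertexCut Y ∧
      t = ((Y.card : ℝ) + (G.delVerts Y).tauMax) / (G.delVerts Y).omegaComp } := by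
    refine ⟨0, ?_⟩
    rintro t ⟨Y, hY, rfl⟩
    have hYpos : (0 : ℝ) ≤ ((G.delVerts Y).omegaComp : ℝ) := Nat.cast_nonneg _
    positivity
  have hmem : ((X.card : ℝ) + (G.delVerts X).tauMax) / (G.delVerts X).omegaComp ∈
      { t : ℝ | ∃ Y : Finset V, G.IsVertexCut Y ∧
        t = ((Y.card : ℝ) + (G.delVerts Y).tauMax) / (G.delVerts Y).omegaComp } :=
    ⟨X, hcut', rfl⟩
  calc G.tenacity ≤ ((X.card : ℝ) + (G.delVerts X).tauMax) / (G.delVerts X).omegaComp :=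
        csInf_le hbdd hmem
    _ ≤ 1 := by
        rw [div_le_one hpos]
        exact_mod_cast hnat
end

section
/- Let G be a connected graph. If there exists a vertex cut X₀ of G such that G−X₀ is a forest and ω(G−X₀) ≥ |X₀| + 3, then T(G) < 1. -/
open SimpleGraph

namespace TenacityAux

variable {W : Type*}

/-- Reachability after deleting one edge: either still reachable, or both endpoints
hook into `{a, b}`. -/
lemma reachable_deleteEdges {G : SimpleGraph W} {a b u v : W} (h : G.Reachable u v) :
    (G.deleteEdges {s(a, b)}).Reachable u v ∨
      (((G.deleteEdges {s(a, b)}).Reachable u a ∨ (G.deleteEdges {s(a, b)}).Reachable u b) ∧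
       ((G.deleteEdges {s(a, b)}).Reachable v a ∨ (G.deleteEdges {s(a, b)}).Reachable v b)) := by
  obtain ⟨p⟩ := h
  induction p with
  | nil => exact Or.inl (Reachable.refl _)
  | @cons u x v hux p ih =>
    by_cases he : s(u, x) = s(a, b)
    · rw [Sym2.eq_iff] at he
      have hu : (G.deleteEdges {s(a, b)}).Reachable u a ∨
          (G.deleteEdges {s(a, b)}).Reachable u b := by
        rcases he with ⟨rfl, rfl⟩ | ⟨rfl, rfl⟩
        · exact Or.inl (Reachable.refl _)
        · exact Or.inr (Reachable.refl _)
      have hx : (G.deleteEdges {s(a, b)}).Reachable x a ∨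
          (G.deleteEdges {s(a, b)}).Reachable x b := by
        rcases he with ⟨rfl, rfl⟩ | ⟨rfl, rfl⟩
        · exact Or.inr (Reachable.refl _)
        · exact Or.inl (Reachable.refl _)
      refine Or.inr ⟨hu, ?_⟩
      rcases ih with hxv | ⟨_, hv⟩
      · rcases hx with h1 | h1
        · exact Or.inl (hxv.symm.trans h1)
        · exact Or.inr (hxv.symm.trans h1)
      · exact hv
    · have hadj : (G.deleteEdges {s(a, b)}).Adj u x := by
        rw [deleteEdges_adj]
        exact ⟨hux, by simpa using he⟩
      rcases ih with hxv | ⟨hx, hv⟩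
      · exact Or.inl (hadj.reachable.trans hxv)
      · refine Or.inr ⟨?_, hv⟩
        rcases hx with h1 | h1
        · exact Or.inl (hadj.reachable.trans h1)
        · exact Or.inr (hadj.reachable.trans h1)

lemma omega_deleteEdges_le [Finite W] (G : SimpleGraph W) (a b : W) :
    Nat.card (G.deleteEdges {s(a, b)}).ConnectedComponent ≤
      Nat.card G.ConnectedComponent + 1 := by
  classical
  set G' := G.deleteEdges {s(a, b)} with hG'
  let f : G'.ConnectedComponent → G.ConnectedComponent :=
    ConnectedComponent.map (Hom.ofLE (deleteEdges_le _))
  have hf : ∀ u : W, f (G'.connectedComponentMk u) = G.connectedComponentMk u := fun u => rfl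
  let F : G'.ConnectedComponent → G.ConnectedComponent ⊕ Unit := fun c =>
    if c = G'.connectedComponentMk a then Sum.inr Unit.unit else Sum.inl (f c)
  have hinj : Function.Injective F := by
    intro c d hcd
    by_cases hc : c = G'.connectedComponentMk a <;>
      by_cases hd : d = G'.connectedComponentMk a
    · rw [hc, hd]
    · rw [show F c = Sum.inr Unit.unit from if_pos hc, show F d = Sum.inl (f d) from if_neg hd]
        at hcd
      exact absurd hcd (by simp)
    · rw [show F d = Sum.inr Unit.unit from if_pos hd, show F c = Sum.inl (f c) from if_neg hc]
        at hcd
      exact absurd hcd (by simp)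
    · rw [show F c = Sum.inl (f c) from if_neg hc, show F d = Sum.inl (f d) from if_neg hd]
        at hcd
      replace hcd : f c = f d := by simpa using hcd
      obtain ⟨u, rfl⟩ := c.exists_rep
      obtain ⟨v, rfl⟩ := d.exists_rep
      rw [show (Quot.mk G'.Reachable u : G'.ConnectedComponent) = G'.connectedComponentMk u
        from rfl] at hc hcd ⊢
      rw [show (Quot.mk G'.Reachable v : G'.ConnectedComponent) = G'.connectedComponentMk v
        from rfl] at hd hcd ⊢
      rw [hf, hf] at hcd
      have hr : G.Reachable u v := ConnectedComponent.eq.mp hcd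
      rcases reachable_deleteEdges (a := a) (b := b) hr with h1 | ⟨h1, h2⟩
      · exact ConnectedComponent.eq.mpr h1
      · have hub : G'.Reachable u b := by
          rcases h1 with h1 | h1
          · exact absurd (ConnectedComponent.eq.mpr h1) hc
          · exact h1
        have hvb : G'.Reachable v b := by
          rcases h2 with h2 | h2
          · exact absurd (ConnectedComponent.eq.mpr h2) hd
          · exact h2
        exact ConnectedComponent.eq.mpr (hub.trans hvb.symm)
  calc Nat.card G'.ConnectedComponent ≤ Nat.card (G.ConnectedComponent ⊕ Unit) :=
        Nat.card_le_card_of_injective F hinj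
    _ = Nat.card G.ConnectedComponent + 1 := by
        rw [Nat.card_sum]; simp

lemma omega_deleteEdges_ge [Finite W] (G : SimpleGraph W) {a b : W} (hab : G.Adj a b)
    (hnr : ¬ (G.deleteEdges {s(a, b)}).Reachable a b) :
    Nat.card G.ConnectedComponent + 1 ≤
      Nat.card (G.deleteEdges {s(a, b)}).ConnectedComponent := by
  classical
  set G' := G.deleteEdges {s(a, b)} with hG'
  let f : G'.ConnectedComponent → G.ConnectedComponent :=
    ConnectedComponent.map (Hom.ofLE (deleteEdges_le _))
  have hf : ∀ u : W, f (G'.connectedComponentMk u) = G.connectedComponentMk u := fun u => rfl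
  have hsurj : Function.Surjective f := by
    intro c
    obtain ⟨u, rfl⟩ := c.exists_rep
    exact ⟨G'.connectedComponentMk u, hf u⟩
  set s := Function.surjInv hsurj with hs
  have hsi : Function.Injective s := Function.injective_surjInv hsurj
  have hfs : ∀ c, f (s c) = c := fun c => Function.surjInv_eq hsurj c
  have hAB : G'.connectedComponentMk a ≠ G'.connectedComponentMk b := by
    intro h
    exact hnr (ConnectedComponent.eq.mp h)
  have hDab : G.connectedComponentMk a = G.connectedComponentMk b :=
    ConnectedComponent.eq.mpr hab.reachable
  set z : G'.ConnectedComponent :=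
    if s (G.connectedComponentMk a) = G'.connectedComponentMk a then G'.connectedComponentMk b
      else G'.connectedComponentMk a with hz
  have hfz : f z = G.connectedComponentMk a := by
    by_cases h : s (G.connectedComponentMk a) = G'.connectedComponentMk a <;>
      simp only [z, h, if_pos, if_neg, if_true, reduceIte]
    · rw [hf]; exact hDab.symm
    · exact hf a
  have hzr : z ∉ Set.range s := by
    rintro ⟨c, hc⟩
    have : c = G.connectedComponentMk a := by rw [← hfs c, hc, hfz]
    rw [this] at hc
    by_cases h : s (G.connectedComponentMk a) = G'.connectedComponentMk a
    · rw [hz, if_pos h] at hc; exact hAB (h ▸ hc ▸ rfl)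
    · rw [hz, if_neg h] at hc; exact h hc
  let F : G.ConnectedComponent ⊕ Unit → G'.ConnectedComponent := Sum.elim s (fun _ => z)
  have hinj : Function.Injective F := by
    rintro (c | c) (d | d) hcd
    · rw [hsi hcd]
    · exact absurd ⟨c, hcd⟩ hzr
    · exact absurd ⟨d, hcd.symm⟩ hzr
    · rfl
  calc Nat.card G.ConnectedComponent + 1 = Nat.card (G.ConnectedComponent ⊕ Unit) := by
        rw [Nat.card_sum]; simp
    _ ≤ Nat.card G'.ConnectedComponent := Nat.card_le_card_of_injective F hinj

lemma omega_bot [Finite W] : Nat.card (⊥ : SimpleGraph W).ConnectedComponent = Nat.card W := by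
  refine (Nat.card_eq_of_bijective (⊥ : SimpleGraph W).connectedComponentMk
    ⟨fun u v h => ?_, fun c => c.exists_rep⟩).symm
  exact reachable_bot.mp (ConnectedComponent.eq.mp h)

lemma omega_le_card [Finite W] (G : SimpleGraph W) :
    Nat.card G.ConnectedComponent ≤ Nat.card W :=
  Nat.card_le_card_of_surjective G.connectedComponentMk (fun c => c.exists_rep)

lemma card_edges_deleteEdges [Finite W] (G : SimpleGraph W) {a b : W} (hab : G.Adj a b) :
    Nat.card (G.deleteEdges {s(a, b)}).edgeSet + 1 = Nat.card G.edgeSet := by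
  rw [Nat.card_coe_set_eq, Nat.card_coe_set_eq, edgeSet_deleteEdges]
  exact Set.ncard_diff_singleton_add_one ((mem_edgeSet G).mpr hab) (Set.toFinite _)

end TenacityAux

namespace TenacityAux

variable {W : Type*}

/-- In any finite graph, `|W| ≤ ω + |E|`. -/
lemma card_le_omega_add_edges [Finite W] (G : SimpleGraph W) :
    Nat.card W ≤ Nat.card G.ConnectedComponent + Nat.card G.edgeSet := by
  classical
  suffices h : ∀ (n : ℕ) (G : SimpleGraph W), Nat.card G.edgeSet = n →
      Nat.card W ≤ Nat.card G.ConnectedComponent + Nat.card G.edgeSet from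
    h _ G rfl
  intro n
  induction n with
  | zero =>
    intro G hG
    have hbot : G = ⊥ := by
      rw [← edgeSet_eq_empty]
      rw [Nat.card_coe_set_eq] at hG
      exact (Set.ncard_eq_zero (Set.toFinite _)).mp hG
    subst hbot
    rw [omega_bot]
    omega
  | succ n ih =>
    intro G hG
    have hne : Nonempty G.edgeSet := (Nat.card_pos_iff.mp (by omega)).1
    obtain ⟨e, he⟩ := hne
    induction e using Sym2.ind with
    | _ a b =>
      have hab : G.Adj a b := (mem_edgeSet G).mp he
      have hcard : Nat.card (G.deleteEdges {s(a, b)}).edgeSet = n := by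
        have := card_edges_deleteEdges G hab
        omega
      have h1 := ih (G.deleteEdges {s(a, b)}) hcard
      have h2 := omega_deleteEdges_le G a b
      omega

/-- In a finite acyclic graph, `|E| + ω ≤ |W|` (in fact equality). -/
lemma edges_add_omega_le_card [Finite W] {G : SimpleGraph W} (hG : G.IsAcyclic) :
    Nat.card G.edgeSet + Nat.card G.ConnectedComponent ≤ Nat.card W := by
  classical
  suffices h : ∀ (n : ℕ) (G : SimpleGraph W), G.IsAcyclic → Nat.card G.edgeSet = n →
      Nat.card G.edgeSet + Nat.card G.ConnectedComponent ≤ Nat.card W from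
    h _ G hG rfl
  intro n
  induction n with
  | zero =>
    intro G _ hG
    rw [hG]
    simpa using omega_le_card G
  | succ n ih =>
    intro G hac hG
    have hne : Nonempty G.edgeSet := (Nat.card_pos_iff.mp (by omega)).1
    obtain ⟨e, he⟩ := hne
    induction e using Sym2.ind with
    | _ a b =>
      have hab : G.Adj a b := (mem_edgeSet G).mp he
      have hbridge := isAcyclic_iff_forall_edge_isBridge.mp hac he
      have hnr : ¬ (G.deleteEdges {s(a, b)}).Reachable a b := isBridge_iff.mp hbridge
      have hac' : (G.deleteEdges {s(a, b)}).IsAcyclic := by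
        intro v c hc
        exact hac (c.map (Hom.ofLE (deleteEdges_le _)))
          (hc.map (fun x y h => h))
      have hcard : Nat.card (G.deleteEdges {s(a, b)}).edgeSet = n := by
        have := card_edges_deleteEdges G hab
        omega
      have h1 := ih (G.deleteEdges {s(a, b)}) hac' hcard
      have h2 := omega_deleteEdges_ge G hab hnr
      omega

/-- In a graph with maximum degree at most one, reachable vertices are equal or adjacent. -/
lemma reachable_of_max_deg_le_one [Finite W] {G : SimpleGraph W}
    (hdeg : ∀ v, Nat.card (G.neighborSet v) ≤ 1) {u v : W} (h : G.Reachable u v) :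
    v = u ∨ G.Adj u v := by
  obtain ⟨p⟩ := h
  induction p with
  | nil => exact Or.inl rfl
  | @cons u x v hux p ih =>
    have hsub : ∀ {y z : W}, G.Adj x y → G.Adj x z → y = z := by
      intro y z hy hz
      have := hdeg x
      rw [Nat.card_coe_set_eq] at this
      exact (Set.ncard_le_one (Set.toFinite _)).mp this y hy z hz
    rcases ih with rfl | hxv
    · exact Or.inr hux
    · exact Or.inl (hsub hxv hux.symm)

/-- In a graph with maximum degree at most one, every component has at most 2 vertices. -/
lemma tauMax_le_two [Finite W] {G : SimpleGraph W}
    (hdeg : ∀ v, Nat.card (G.neighborSet v) ≤ 1) : G.tauMax ≤ 2 := by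
  classical
  refine csSup_le' ?_
  rintro x ⟨c, rfl⟩
  obtain ⟨u, rfl⟩ := c.exists_rep
  have hmk : (Quot.mk G.Reachable u : G.ConnectedComponent) = G.connectedComponentMk u := rfl
  rw [hmk]
  haveI := Fintype.ofFinite (G.neighborSet u)
  let F : {v : W // G.connectedComponentMk v = G.connectedComponentMk u} →
      Option (G.neighborSet u) := fun v =>
    if h : G.Adj u v.1 then some ⟨v.1, h⟩ else none
  have hinj : Function.Injective F := by
    rintro ⟨v, hv⟩ ⟨w, hw⟩ hvw
    have hv' : v = u ∨ G.Adj u v :=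
      reachable_of_max_deg_le_one hdeg (ConnectedComponent.eq.mp hv).symm
    have hw' : w = u ∨ G.Adj u w :=
      reachable_of_max_deg_le_one hdeg (ConnectedComponent.eq.mp hw).symm
    simp only [F] at hvw
    by_cases h1 : G.Adj u v <;> by_cases h2 : G.Adj u w
    · rw [dif_pos h1, dif_pos h2] at hvw
      simpa using congrArg (fun o => (Option.map Subtype.val o).getD u) hvw
    · rw [dif_pos h1, dif_neg h2] at hvw; exact absurd hvw (by simp)
    · rw [dif_neg h1, dif_pos h2] at hvw; exact absurd hvw (by simp)
    · have : v = u := hv'.resolve_right h1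
      have : w = u := hw'.resolve_right h2
      simp_all
  calc Nat.card {v : W // G.connectedComponentMk v = G.connectedComponentMk u}
      ≤ Nat.card (Option (G.neighborSet u)) := Nat.card_le_card_of_injective F hinj
    _ = Nat.card (G.neighborSet u) + 1 := Finite.card_option
    _ ≤ 2 := by have := hdeg u; omega

end TenacityAux

namespace TenacityAux

variable {W : Type*}

/-- The graph obtained from `H` by removing all edges incident to `Y`. -/
def isol (H : SimpleGraph W) (Y : Finset W) : SimpleGraph W where
  Adj a b := H.Adj a b ∧ a ∉ Y ∧ b ∉ Y
  symm := ⟨fun a b ⟨h, ha, hb⟩ => ⟨h.symm, hb, ha⟩⟩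
  loopless := ⟨fun a ⟨h, _, _⟩ => H.loopless.irrefl a h⟩

@[simp] lemma isol_adj (H : SimpleGraph W) (Y : Finset W) (a b : W) :
    (isol H Y).Adj a b ↔ H.Adj a b ∧ a ∉ Y ∧ b ∉ Y := Iff.rfl

lemma isol_empty (H : SimpleGraph W) : isol H ∅ = H := by
  ext a b; simp

lemma isol_insert (H : SimpleGraph W) (v : W) (Y : Finset W) [DecidableEq W] :
    isol H (insert v Y) = isol (isol H {v}) Y := by
  ext a b
  simp only [isol_adj, Finset.mem_insert, Finset.mem_singleton]
  tauto

lemma card_edges_isol_singleton [Finite W] (H : SimpleGraph W) (v : W) :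
    Nat.card (isol H {v}).edgeSet + Nat.card (H.neighborSet v) = Nat.card H.edgeSet := by
  classical
  have hset : (isol H {v}).edgeSet = H.edgeSet \ H.incidenceSet v := by
    ext e
    induction e using Sym2.ind with
    | _ a b =>
      simp only [mem_edgeSet, isol_adj, Finset.mem_singleton, Set.mem_diff, incidenceSet,
        Set.mem_setOf_eq, Sym2.mem_iff]
      constructor
      · rintro ⟨h, ha, hb⟩
        exact ⟨h, fun ⟨_, hv⟩ => by rcases hv with rfl | rfl <;> simp_all⟩
      · rintro ⟨h, hn⟩
        refine ⟨h, fun hv => hn ⟨h, Or.inl hv.symm⟩, fun hv => hn ⟨h, Or.inr hv.symm⟩⟩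
  have h1 : Nat.card (H.neighborSet v) = (H.incidenceSet v).ncard := by
    rw [← Nat.card_coe_set_eq]
    exact Nat.card_congr (H.incidenceSetEquivNeighborSet v).symm
  rw [h1, hset, Nat.card_coe_set_eq, Nat.card_coe_set_eq]
  exact Set.ncard_diff_add_ncard_of_subset (H.incidenceSet_subset v) (Set.toFinite _)

/-- Greedy isolation: one can delete (isolate) a set `Y` of vertices from `H` so that the
remaining graph has maximum degree at most 1, losing at least two edges per deleted vertex. -/
lemma exists_isol [Finite W] (H : SimpleGraph W) :
    ∃ Y : Finset W, (∀ v, Nat.card ((isol H Y).neighborSet v) ≤ 1) ∧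
      Nat.card (isol H Y).edgeSet + 2 * Y.card ≤ Nat.card H.edgeSet := by
  classical
  suffices h : ∀ (n : ℕ) (H : SimpleGraph W), Nat.card H.edgeSet ≤ n →
      ∃ Y : Finset W, (∀ v, Nat.card ((isol H Y).neighborSet v) ≤ 1) ∧
        Nat.card (isol H Y).edgeSet + 2 * Y.card ≤ Nat.card H.edgeSet from
    h _ H le_rfl
  intro n
  induction n with
  | zero =>
    intro H hH
    refine ⟨∅, ?_, ?_⟩ <;> rw [isol_empty]
    · intro v
      by_contra h
      have h2 : 2 ≤ Nat.card (H.neighborSet v) := by omega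
      have : Nonempty (H.neighborSet v) := (Nat.card_pos_iff.mp (by omega)).1
      obtain ⟨⟨w, hw⟩⟩ := this
      have : Nonempty H.edgeSet := ⟨⟨s(v, w), (mem_edgeSet H).mpr hw⟩⟩
      have := Nat.card_pos_iff.mpr ⟨this, (Set.toFinite _).to_subtype⟩
      omega
    · simpa using hH.trans (Nat.zero_le _)
  | succ n ih =>
    intro H hH
    by_cases hd : ∀ v, Nat.card (H.neighborSet v) ≤ 1
    · exact ⟨∅, by rw [isol_empty]; exact ⟨hd, by simp⟩⟩
    · push_neg at hd
      obtain ⟨v, hv⟩ := hd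
      have hv2 : 2 ≤ Nat.card (H.neighborSet v) := hv
      have hcard := card_edges_isol_singleton H v
      obtain ⟨Y₁, hY₁deg, hY₁count⟩ := ih (isol H {v}) (by omega)
      refine ⟨insert v Y₁, ?_, ?_⟩
      · intro w
        rw [isol_insert]
        exact hY₁deg w
      · rw [isol_insert]
        have := Finset.card_insert_le v Y₁
        omega

end TenacityAux

namespace TenacityAux

lemma card_compl_finset {V : Type*} [Fintype V] (X : Finset V) :
    Nat.card {v : V // v ∉ X} + X.card = Fintype.card V := by
  classical
  have h1 : Nat.card {v : V // v ∉ X} = ((↑X : Set V)ᶜ).ncard := by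
    rw [← Nat.card_coe_set_eq]
    exact Nat.card_congr (Equiv.subtypeEquivRight (by simp))
  have h2 := Set.ncard_add_ncard_compl (↑X : Set V)
  rw [Set.ncard_coe_finset] at h2
  rw [h1, Nat.card_eq_fintype_card] at *
  omega

end TenacityAux

theorem tenacity_lt_one_of_forest_cut {V : Type*} [Fintype V]
    (G : SimpleGraph V) (hG : G.Connected) (X₀ : Finset V)
    (hcut : G.IsVertexCut X₀) (hforest : (G.delVerts X₀).IsAcyclic)
    (hω : X₀.card + 3 ≤ (G.delVerts X₀).omegaComp) :
    G.tenacity < 1 := by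
  classical
  obtain ⟨Y, hYdeg, hYcount⟩ := TenacityAux.exists_isol (G.delVerts X₀)
  set F := G.delVerts X₀ with hF
  set X' : Finset V := X₀ ∪ Y.image Subtype.val with hX'
  have hdisj : Disjoint X₀ (Y.image Subtype.val) := by
    rw [Finset.disjoint_right]
    rintro a ha
    simp only [Finset.mem_image] at ha
    obtain ⟨⟨a, hnot⟩, _, rfl⟩ := ha
    exact hnot
  have hcardX' : X'.card = X₀.card + Y.card := by
    rw [hX', Finset.card_union_of_disjoint hdisj,
      Finset.card_image_of_injective _ Subtype.val_injective]
  have hXsub : ∀ {v : V}, v ∈ X₀ → v ∈ X' := by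
    intro v hv
    rw [hX']
    exact Finset.mem_union_left _ hv
  set ι : {v : V // v ∉ X'} → {v : V // v ∉ X₀} :=
    fun u => ⟨u.1, fun h => u.2 (hXsub h)⟩ with hι
  have hιinj : Function.Injective ι := by
    rintro ⟨a, ha⟩ ⟨b, hb⟩ h
    have : a = b := congrArg Subtype.val h
    subst this
    rfl
  have hιY : ∀ u : {v : V // v ∉ X'}, ι u ∉ Y := by
    rintro ⟨u, hu⟩ h
    refine hu ?_
    rw [hX']
    exact Finset.mem_union_right _ (Finset.mem_image.mpr ⟨_, h, rfl⟩)
  have hadj : ∀ a b : {v : V // v ∉ X'},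
      (G.delVerts X').Adj a b ↔ (TenacityAux.isol F Y).Adj (ι a) (ι b) := by
    intro a b
    simp only [TenacityAux.isol_adj, delVerts, comap_adj]
    exact ⟨fun h => ⟨h, hιY a, hιY b⟩, fun ⟨h, _, _⟩ => h⟩
  have hdegK : ∀ a, Nat.card ((G.delVerts X').neighborSet a) ≤ 1 := by
    intro a
    refine le_trans (Nat.card_le_card_of_injective
      (fun w => ⟨ι w.1, (hadj a w.1).mp w.2⟩ :
        (G.delVerts X').neighborSet a → (TenacityAux.isol F Y).neighborSet (ι a)) ?_)
      (hYdeg (ι a))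
    rintro ⟨w₁, h₁⟩ ⟨w₂, h₂⟩ h
    exact Subtype.ext (hιinj (congrArg Subtype.val h))
  have htau : (G.delVerts X').tauMax ≤ 2 := TenacityAux.tauMax_le_two hdegK
  have hedge : Nat.card (G.delVerts X').edgeSet ≤ Nat.card (TenacityAux.isol F Y).edgeSet := by
    have key : ∀ e ∈ (G.delVerts X').edgeSet, Sym2.map ι e ∈ (TenacityAux.isol F Y).edgeSet := by
      intro e he
      induction e using Sym2.ind with
      | _ a b => simpa using (hadj a b).mp he
    refine Nat.card_le_card_of_injective
      (fun e => ⟨Sym2.map ι e.1, key e.1 e.2⟩ :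
        (G.delVerts X').edgeSet → (TenacityAux.isol F Y).edgeSet) ?_
    rintro ⟨e₁, h₁⟩ ⟨e₂, h₂⟩ h
    replace h : Sym2.map ι e₁ = Sym2.map ι e₂ := congrArg Subtype.val h
    refine Subtype.ext ?_
    induction e₁ using Sym2.ind with
    | _ a b =>
      induction e₂ using Sym2.ind with
      | _ c d =>
        rw [Sym2.map_pair_eq, Sym2.map_pair_eq, Sym2.eq_iff] at h
        rw [Sym2.eq_iff]
        rcases h with ⟨h1, h2⟩ | ⟨h1, h2⟩
        · exact Or.inl ⟨hιinj h1, hιinj h2⟩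
        · exact Or.inr ⟨hιinj h1, hιinj h2⟩
  have hA := TenacityAux.card_le_omega_add_edges (G.delVerts X')
  have hB := TenacityAux.edges_add_omega_le_card hforest
  have hcardW := TenacityAux.card_compl_finset X₀
  have hcardU := TenacityAux.card_compl_finset X'
  have hω' : X₀.card + 3 ≤ Nat.card F.ConnectedComponent := hω
  have homega : X'.card + 3 ≤ Nat.card (G.delVerts X').ConnectedComponent := by omega
  have hcut' : G.IsVertexCut X' := by
    show 1 < (G.delVerts X').omegaComp
    show 1 < Nat.card (G.delVerts X').ConnectedComponent
    omega
  have hmem : ((X'.card : ℝ) + (G.delVerts X').tauMax) / (G.delVerts X').omegaComp ∈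
      { t : ℝ | ∃ X : Finset V, G.IsVertexCut X ∧
        t = ((X.card : ℝ) + (G.delVerts X).tauMax) / (G.delVerts X).omegaComp } :=
    ⟨X', hcut', rfl⟩
  have hbdd : BddBelow { t : ℝ | ∃ X : Finset V, G.IsVertexCut X ∧
      t = ((X.card : ℝ) + (G.delVerts X).tauMax) / (G.delVerts X).omegaComp } := by
    refine ⟨0, ?_⟩
    rintro t ⟨X, hX, rfl⟩
    positivity
  have h1 : G.tenacity ≤ ((X'.card : ℝ) + (G.delVerts X').tauMax) / (G.delVerts X').omegaComp :=
    csInf_le hbdd hmem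
  have homega'' : X'.card + 3 ≤ (G.delVerts X').omegaComp := homega
  have htau' : (G.delVerts X').tauMax ≤ 2 := htau
  have h2 : ((X'.card : ℝ) + (G.delVerts X').tauMax) / (G.delVerts X').omegaComp < 1 := by
    rw [div_lt_one (by exact_mod_cast Nat.lt_of_lt_of_le (by omega) homega'')]
    have hnat : X'.card + (G.delVerts X').tauMax < (G.delVerts X').omegaComp := by omega
    exact_mod_cast hnat
  linarith
end

section
/- Let G be a connected graph on n vertices with minimum tenacity among all connected graphs with n vertices and m edges, where n−1 ≤ m ≤ C(n,2)−1, and let k be the unique integer with C(k,2) + (n−k)(k−1) < m ≤ C(k,2) + (n−k)k. Then T(G) = (k+1)/(n−k). -/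
open SimpleGraph

/-! ### Auxiliary lemmas -/

section Components
variable {W : Type*} [Fintype W]

open Finset in
open scoped Classical in
lemma MT.fiber_sum (G : SimpleGraph W) :
    ∑ c : G.ConnectedComponent, Nat.card {v : W // G.connectedComponentMk v = c}
      = Fintype.card W := by
  classical
  simp only [Nat.card_eq_fintype_card]
  rw [← Fintype.card_sigma]
  exact Fintype.card_congr (Equiv.sigmaFiberEquiv _)

open scoped Classical in
lemma MT.fiber_le_tauMax (G : SimpleGraph W) (c : G.ConnectedComponent) :
    Nat.card {v : W // G.connectedComponentMk v = c} ≤ G.tauMax :=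
  le_csSup (Set.finite_range _).bddAbove ⟨c, rfl⟩

lemma MT.fiber_pos (G : SimpleGraph W) (c : G.ConnectedComponent) :
    0 < Nat.card {v : W // G.connectedComponentMk v = c} := by
  classical
  obtain ⟨v, rfl⟩ := c.exists_rep
  have h : Nonempty {w : W // G.connectedComponentMk w = G.connectedComponentMk v} := ⟨⟨v, rfl⟩⟩
  exact @Nat.card_pos _ h _

lemma MT.tauMax_mem [Nonempty W] (G : SimpleGraph W) :
    ∃ c : G.ConnectedComponent,
      Nat.card {v : W // G.connectedComponentMk v = c} = G.tauMax := by
  have hNE : Nonempty G.ConnectedComponent := ⟨G.connectedComponentMk (Classical.arbitrary W)⟩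
  have hne : (Set.range fun c : G.ConnectedComponent =>
      Nat.card {v : W // G.connectedComponentMk v = c}).Nonempty :=
    Set.range_nonempty (ι := G.ConnectedComponent) _
  have := hne.csSup_mem (Set.finite_range _)
  obtain ⟨c, hc⟩ := this
  exact ⟨c, hc⟩

lemma MT.tauMax_pos [Nonempty W] (G : SimpleGraph W) : 0 < G.tauMax := by
  obtain ⟨c, hc⟩ := MT.tauMax_mem G
  exact hc ▸ MT.fiber_pos G c

open Finset in
open scoped Classical in
lemma MT.omega_add_tau (G : SimpleGraph W) (hω : 1 < G.omegaComp) :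
    G.omegaComp + G.tauMax ≤ Fintype.card W + 1 := by
  classical
  have hNW : Nonempty W := by
    by_contra h
    rw [not_nonempty_iff] at h
    have : IsEmpty G.ConnectedComponent := by
      constructor; intro c; obtain ⟨v, _⟩ := c.exists_rep; exact h.elim v
    simp [SimpleGraph.omegaComp, Nat.card_eq_fintype_card, Fintype.card_eq_zero] at hω
  obtain ⟨c₀, hc₀⟩ := MT.tauMax_mem G
  have hsum := MT.fiber_sum G
  have : G.omegaComp = ∑ c : G.ConnectedComponent, 1 := by
    simp [SimpleGraph.omegaComp, Nat.card_eq_fintype_card]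
  rw [this]
  have h1 : ∀ c : G.ConnectedComponent, c ≠ c₀ →
      1 ≤ Nat.card {v : W // G.connectedComponentMk v = c} := fun c _ => MT.fiber_pos G c
  calc (∑ c : G.ConnectedComponent, 1) + G.tauMax
      = (∑ c ∈ Finset.univ.erase c₀, 1) + 1 + G.tauMax := by
        rw [Finset.sum_erase_add _ _ (Finset.mem_univ c₀)]
    _ ≤ (∑ c ∈ Finset.univ.erase c₀, Nat.card {v : W // G.connectedComponentMk v = c})
          + 1 + Nat.card {v : W // G.connectedComponentMk v = c₀} := by
        gcongr with c hc
        · exact h1 c (Finset.ne_of_mem_erase hc)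
        · exact hc₀.ge
    _ = Fintype.card W + 1 := by
        have h2 : (∑ c ∈ Finset.univ.erase c₀, Nat.card {v : W // G.connectedComponentMk v = c})
            + Nat.card {v : W // G.connectedComponentMk v = c₀}
            = ∑ c : G.ConnectedComponent, Nat.card {v : W // G.connectedComponentMk v = c} :=
          Finset.sum_erase_add _ _ (Finset.mem_univ c₀)
        omega

lemma MT.omega_of_bot (G : SimpleGraph W) (h : ∀ a b, ¬ G.Adj a b) :
    G.omegaComp = Fintype.card W := by
  have hbot : G = ⊥ := by
    ext a b; simp [h a b]
  subst hbot
  rw [SimpleGraph.omegaComp, ← Nat.card_eq_fintype_card]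
  apply Nat.card_congr
  apply Equiv.symm
  exact Equiv.ofBijective (fun w => (⊥ : SimpleGraph W).connectedComponentMk w)
    ⟨fun a b hab => reachable_bot.mp (ConnectedComponent.eq.mp hab),
     fun c => c.exists_rep⟩

lemma MT.tau_of_bot [Nonempty W] (G : SimpleGraph W)
    (h : ∀ a b, ¬ G.Adj a b) : G.tauMax = 1 := by
  have hbot : G = ⊥ := by ext a b; simp [h a b]
  subst hbot
  rw [SimpleGraph.tauMax]
  have hval : ∀ c : (⊥ : SimpleGraph W).ConnectedComponent,
      Nat.card {v : W // (⊥ : SimpleGraph W).connectedComponentMk v = c} = 1 := by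
    intro c
    obtain ⟨w, rfl⟩ := c.exists_rep
    rw [Nat.card_eq_one_iff_unique]
    constructor
    · constructor
      intro a b
      have ha := reachable_bot.mp (ConnectedComponent.eq.mp a.2)
      have hb := reachable_bot.mp (ConnectedComponent.eq.mp b.2)
      exact Subtype.ext (ha.trans hb.symm)
    · exact ⟨⟨w, rfl⟩⟩
  have : (Set.range fun c : (⊥ : SimpleGraph W).ConnectedComponent =>
      Nat.card {v : W // (⊥ : SimpleGraph W).connectedComponentMk v = c}) = {1} := by
    apply Set.eq_singleton_iff_nonempty_unique_mem.mpr
    constructor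
    · exact ⟨_, ⟨(⊥ : SimpleGraph W).connectedComponentMk (Classical.arbitrary W), rfl⟩⟩
    · rintro y ⟨c, rfl⟩; exact hval c
  rw [this, csSup_singleton]

end Components

lemma MT.deg_bound {V : Type*} [Fintype V] (G : SimpleGraph V) (X : Finset V)
    {v : V} (hv : v ∉ X) :
    G.deg v + 1 ≤ X.card + (G.delVerts X).tauMax := by
  classical
  set W := {w : V // w ∉ X}
  set G' := G.delVerts X with hG'
  set v' : W := ⟨v, hv⟩
  set c : G'.ConnectedComponent := G'.connectedComponentMk v' with hc
  set F := {w : W // G'.connectedComponentMk w = c}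
  set v'' : F := ⟨v', rfl⟩
  have hinj : ∃ f : G.neighborSet v → X ⊕ {u : F // u ≠ v''}, Function.Injective f := by
    refine ⟨fun u => if hu : (u : V) ∈ X then Sum.inl ⟨u, hu⟩ else
      Sum.inr ⟨⟨⟨u, hu⟩, ?_⟩, ?_⟩, ?_⟩
    · have hadj : G'.Adj ⟨(u : V), hu⟩ v' := by
        exact (G.adj_symm u.2 : G.Adj (u : V) v)
      exact ConnectedComponent.sound hadj.reachable
    · intro h
      have : (u : V) = v := congrArg (fun z : F => ((z : W) : V)) h
      exact G.ne_of_adj u.2 this.symm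
    · intro a b hab
      by_cases ha : (a : V) ∈ X <;> by_cases hb : (b : V) ∈ X <;>
        simp only [ha, hb, dif_pos, dif_neg, not_false_iff] at hab
      · have h := Sum.inl.inj hab
        rw [Subtype.mk_eq_mk] at h
        exact Subtype.ext h
      · exact absurd hab (by simp)
      · exact absurd hab (by simp)
      · have := Sum.inr.inj hab
        have : ((a : V)) = (b : V) :=
          congrArg (fun z : {u : F // u ≠ v''} => (((z : F) : W) : V)) this
        exact Subtype.ext this
  obtain ⟨f, hf⟩ := hinj
  have h1 : G.deg v ≤ Nat.card (X ⊕ {u : F // u ≠ v''}) :=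
    Nat.card_le_card_of_injective f hf
  have h2 : Nat.card (X ⊕ {u : F // u ≠ v''}) = X.card + Nat.card {u : F // u ≠ v''} := by
    simp [Nat.card_eq_fintype_card, Fintype.card_sum]
  have h3 : Nat.card {u : F // u ≠ v''} = Nat.card F - 1 := by
    simp only [Nat.card_eq_fintype_card]
    have : Fintype.card {u : F // ¬ (u = v'')} = Fintype.card F - Fintype.card {u : F // u = v''} :=
      Fintype.card_subtype_compl _
    simpa [Fintype.card_subtype_eq] using this
  have hFne : Nonempty F := ⟨v''⟩
  have h4 : 1 ≤ Nat.card F := @Nat.card_pos _ hFne _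
  have h5 : Nat.card F ≤ G'.tauMax := MT.fiber_le_tauMax G' c
  omega

lemma MT.two_choose_two (k : ℕ) : 2 * k.choose 2 = k * (k - 1) := by
  rw [Nat.choose_two_right, Nat.mul_div_cancel' k.even_mul_pred_self.two_dvd]

open Finset in
lemma MT.cut_lower (n m k : ℕ)
    (hk1 : k.choose 2 + (n - k) * (k - 1) < m)
    (hkn : k + 2 ≤ n)
    (G : SimpleGraph (Fin n)) (hGm : Nat.card G.edgeSet = m)
    (X : Finset (Fin n)) (hX : 1 < (G.delVerts X).omegaComp) :
    ((k : ℝ) + 1) / ((n : ℝ) - (k : ℝ)) ≤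
      ((X.card : ℝ) + (G.delVerts X).tauMax) / (G.delVerts X).omegaComp := by
  classical
  set x := X.card with hx
  set τ := (G.delVerts X).tauMax with hτ
  set ω := (G.delVerts X).omegaComp with hω
  have hxn : x ≤ n := by simpa using X.card_le_univ
  have hcardW : Fintype.card {w : Fin n // w ∉ X} = n - x := by
    simp [Fintype.card_subtype_compl, hx]
  have hWne : Nonempty {w : Fin n // w ∉ X} := by
    have h0 : 0 < Nat.card (G.delVerts X).ConnectedComponent := by
      have h := hX
      rw [hω, SimpleGraph.omegaComp] at h
      omega
    rw [Nat.card_pos_iff] at h0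
    obtain ⟨c⟩ := h0.1
    obtain ⟨w, _⟩ := c.exists_rep
    exact ⟨w⟩
  have hτ1 : 1 ≤ τ := MT.tauMax_pos (G.delVerts X)
  have hωτ : ω + τ ≤ (n - x) + 1 := by
    have := MT.omega_add_tau (G.delVerts X) hX
    rwa [hcardW] at this
  have hhand : ∑ v : Fin n, G.degree v = 2 * m := by
    rw [G.sum_degrees_eq_twice_card_edges, ← hGm, Nat.card_eq_fintype_card,
      SimpleGraph.edgeFinset_card]
  have hdegdeg : ∀ v : Fin n, G.deg v = G.degree v := by
    intro v
    rw [SimpleGraph.deg, Nat.card_eq_fintype_card, ← Set.toFinset_card]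
    rfl
  have hdeglt : ∀ v : Fin n, G.degree v ≤ n - 1 := by
    intro v
    have := G.degree_lt_card_verts v
    simp only [Fintype.card_fin] at this
    omega
  have hsplit : (∑ v ∈ X, G.degree v) + ∑ v ∈ Xᶜ, G.degree v = 2 * m := by
    rw [Finset.sum_add_sum_compl]; exact hhand
  have hXsum : ∑ v ∈ X, G.degree v ≤ x * (n - 1) := by
    calc ∑ v ∈ X, G.degree v ≤ ∑ _v ∈ X, (n-1) := Finset.sum_le_sum fun v _ => hdeglt v
    _ = x * (n-1) := by rw [Finset.sum_const, smul_eq_mul]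
  have hXcsum : ∑ v ∈ Xᶜ, G.degree v ≤ (n - x) * (x + τ - 1) := by
    calc ∑ v ∈ Xᶜ, G.degree v ≤ ∑ _v ∈ Xᶜ, (x + τ - 1) := by
          apply Finset.sum_le_sum
          intro v hv
          have hv' : v ∉ X := by simpa using hv
          have := MT.deg_bound G X hv'
          rw [hdegdeg] at this
          omega
    _ = (n - x) * (x + τ - 1) := by
          rw [Finset.sum_const, smul_eq_mul, Finset.card_compl, Fintype.card_fin]
  have hedge : 2 * m ≤ x * (n - 1) + (n - x) * (x + τ - 1) := by omega
  have hkey : k + 1 ≤ x + τ := by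
    by_contra hcon
    push_neg at hcon
    have hxk : x ≤ k - 1 := by omega
    have hτk : x + τ - 1 ≤ k - 1 := by omega
    have hk1' : k * (k-1) + 2 * ((n-k) * (k-1)) < 2 * m := by
      have := MT.two_choose_two k
      omega
    have hk1'' : 1 ≤ k := by omega
    have hb : 2 * m ≤ x * (n-1) + (n - x) * (k - 1) := by
      have : (n - x) * (x + τ - 1) ≤ (n - x) * (k - 1) := Nat.mul_le_mul_left _ hτk
      omega
    have hxk' : x ≤ k := by omega
    zify [hk1'', hxn, hxk, hxk', (by omega : k ≤ n), (by omega : 1 ≤ n)] at hk1' hb hxk ⊢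
    nlinarith [mul_nonneg (by omega : (0:ℤ) ≤ (k:ℤ) - 1 - x) (by omega : (0:ℤ) ≤ (n:ℤ) - k)]
  have hωnk : ω ≤ n - k := by omega
  have hω2 : 2 ≤ ω := hX
  have hnk : (0:ℝ) < (n:ℝ) - k := by
    have : (k:ℝ) + 2 ≤ n := by exact_mod_cast hkn
    linarith
  have hωpos : (0:ℝ) < (ω:ℝ) := by
    have : (2:ℝ) ≤ (ω:ℝ) := by exact_mod_cast hω2
    linarith
  rw [div_le_div_iff₀ hnk hωpos]
  have hc1 : ((k:ℝ) + 1) ≤ (x:ℝ) + τ := by exact_mod_cast hkey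
  have hc2 : (ω:ℝ) ≤ (n:ℝ) - k := by
    have h := hωnk
    have : ((ω:ℕ):ℝ) ≤ ((n - k : ℕ):ℝ) := by exact_mod_cast h
    rw [Nat.cast_sub (by omega : k ≤ n)] at this
    exact this
  calc ((k:ℝ) + 1) * ω ≤ ((x:ℝ) + τ) * ((n:ℝ) - k) := by
        apply mul_le_mul hc1 hc2 (le_of_lt hωpos)
        positivity
  _ = ((x:ℝ) + τ) * ((n:ℝ) - k) := rfl

open Finset in
lemma MT.cut_of_nonedge {n : ℕ} (G : SimpleGraph (Fin n)) {u v : Fin n} (huv : u ≠ v)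
    (hna : ¬ G.Adj u v) : G.IsVertexCut (univ \ {u, v}) := by
  classical
  set X : Finset (Fin n) := univ \ {u, v} with hX
  have hmem : ∀ w : Fin n, w ∉ X ↔ (w = u ∨ w = v) := by
    intro w; simp [hX]; tauto
  have hnoadj : ∀ a b, ¬ (G.delVerts X).Adj a b := by
    rintro ⟨a, ha⟩ ⟨b, hb⟩ hab
    have hadj : G.Adj a b := hab
    have hne : a ≠ b := G.ne_of_adj hadj
    rcases (hmem a).mp ha with rfl | rfl <;> rcases (hmem b).mp hb with rfl | rfl
    · exact hne rfl
    · exact hna hadj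
    · exact hna hadj.symm
    · exact hne rfl
  rw [SimpleGraph.IsVertexCut, MT.omega_of_bot _ hnoadj]
  have : Fintype.card {w : Fin n // w ∉ X} = 2 := by
    rw [Fintype.card_subtype]
    rw [show (univ.filter fun w : Fin n => w ∉ X) = {u, v} by
      ext w; simp [hmem w]]
    rw [Finset.card_insert_of_notMem (by simpa using huv), Finset.card_singleton]
  omega

set_option linter.unusedSectionVars false
open Finset

section Hdef
variable (n k s : ℕ)

/-- degree target for outside vertices -/
def dfun (j : ℕ) : ℕ := if j < k + s then k else k - 1

def Hgraph : SimpleGraph (Fin n) where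
  Adj u v := u ≠ v ∧ (((u:ℕ) < k ∧ (v:ℕ) < k) ∨ ((u:ℕ) < dfun k s (v:ℕ) ∧ k ≤ (v:ℕ))
    ∨ ((v:ℕ) < dfun k s (u:ℕ) ∧ k ≤ (u:ℕ)))
  symm := by
    refine ⟨?_⟩; rintro u v ⟨h1, h2⟩
    exact ⟨h1.symm, by tauto⟩
  loopless := by refine ⟨?_⟩; rintro u ⟨h1, -⟩; exact h1 rfl

lemma dfun_le (j : ℕ) : dfun k s j ≤ k := by
  rw [dfun]; split <;> omega

variable {n k s : ℕ} (hk : 1 ≤ k) (hkn : k + 2 ≤ n) (hs1 : 1 ≤ s) (hsnk : s ≤ n - k)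
  (hk1 : k = 1 → k + s = n)

include hk hkn hs1 hsnk hk1 in
lemma dfun_pos {j : ℕ} (hj : j < n) : 0 < dfun k s j := by
  rw [dfun]; split
  · omega
  · rename_i h
    rcases Nat.eq_or_lt_of_le hk with h1 | h2
    · have := hk1 h1.symm; omega
    · omega

include hk hkn hs1 hsnk hk1 in
lemma Hconn : (Hgraph n k s).Connected := by
  have hn0 : 0 < n := by omega
  set z : Fin n := ⟨0, hn0⟩ with hz
  have hreach : ∀ u : Fin n, (Hgraph n k s).Reachable u z := by
    intro u
    rcases eq_or_ne u z with rfl | hne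
    · rfl
    have : (Hgraph n k s).Adj u z := by
      refine ⟨hne, ?_⟩
      by_cases hu : (u:ℕ) < k
      · left; constructor
        · exact hu
        · simp [hz]; omega
      · right; right
        refine ⟨?_, by omega⟩
        have : (z:ℕ) = 0 := rfl
        rw [this]
        exact dfun_pos hk hkn hs1 hsnk hk1 u.2
    exact this.reachable
  have : Nonempty (Fin n) := ⟨z⟩
  exact SimpleGraph.Connected.mk (fun a b => (hreach a).trans (hreach b).symm)
end Hdef

section Hcount
variable {n k s : ℕ}

instance : DecidableRel (Hgraph n k s).Adj := fun u v =>
  inferInstanceAs (Decidable (u ≠ v ∧ _))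

lemma card_filter_val (n : ℕ) (p : ℕ → Prop) [DecidablePred p] :
    #(Finset.univ.filter fun u : Fin n => p u.val) = #((Finset.Iio n).filter p) := by
  rw [← Fin.map_valEmbedding_univ, Finset.filter_map, Finset.card_map]
  rfl

lemma Hdeg_eq (v : Fin n) (p : ℕ → Prop) [DecidablePred p]
    (h : ∀ u : Fin n, (Hgraph n k s).Adj v u ↔ p u.val) :
    (Hgraph n k s).degree v = #((Finset.Iio n).filter p) := by
  rw [← card_filter_val]
  rw [SimpleGraph.degree, SimpleGraph.neighborFinset_eq_filter]
  congr 1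
  apply Finset.filter_congr
  intro u _
  simp only [h u]

variable (hk : 1 ≤ k) (hkn : k + 2 ≤ n) (hs1 : 1 ≤ s) (hsnk : s ≤ n - k)

include hk hkn hs1 hsnk in
lemma Hdeg_big (v : Fin n) (hv : k ≤ (v:ℕ)) :
    (Hgraph n k s).degree v = dfun k s (v:ℕ) := by
  rw [Hdeg_eq v (fun j => j < dfun k s (v:ℕ))]
  · rw [show (Finset.Iio n).filter (fun j => j < dfun k s (v:ℕ)) = Finset.Iio (dfun k s (v:ℕ)) by
      ext j
      have := dfun_le k s (v:ℕ)
      simp only [Finset.mem_filter, Finset.mem_Iio]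
      omega]
    exact Nat.card_Iio _
  · intro u
    constructor
    · rintro ⟨hne, h | h | h⟩
      · omega
      · have := dfun_le k s (u:ℕ); omega
      · exact h.1
    · intro hu
      have hle := dfun_le k s (v:ℕ)
      refine ⟨?_, Or.inr (Or.inr ⟨hu, hv⟩)⟩
      intro heq
      rw [heq] at hu hv
      have := dfun_le k s (u:ℕ)
      omega

include hk hkn hs1 hsnk in
lemma Hdeg_small (v : Fin n) (hv : (v:ℕ) < k - 1) :
    (Hgraph n k s).degree v = n - 1 := by
  rw [Hdeg_eq v (fun j => j ≠ (v:ℕ))]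
  · rw [show (Finset.Iio n).filter (fun j => j ≠ (v:ℕ)) = (Finset.Iio n).erase (v:ℕ) by
      ext j
      simp only [Finset.mem_filter, Finset.mem_erase, Finset.mem_Iio]
      tauto]
    rw [Finset.card_erase_of_mem (by simpa using v.isLt), Nat.card_Iio]
  · intro u
    constructor
    · rintro ⟨hne, -⟩
      exact fun h => hne (Fin.ext h).symm
    · intro hu
      refine ⟨fun h => hu (congrArg Fin.val h.symm), ?_⟩
      by_cases huk : (u:ℕ) < k
      · exact Or.inl ⟨by omega, huk⟩
      · refine Or.inr (Or.inl ⟨?_, by omega⟩)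
        rw [dfun]; split <;> omega

include hk hkn hs1 hsnk in
lemma Hdeg_mid (v : Fin n) (hv : (v:ℕ) = k - 1) :
    (Hgraph n k s).degree v = k + s - 1 := by
  have hksn : k + s ≤ n := by omega
  rw [Hdeg_eq v (fun j => j < k + s ∧ j ≠ k - 1)]
  · rw [show (Finset.Iio n).filter (fun j => j < k + s ∧ j ≠ k - 1)
        = (Finset.Iio (k+s)).erase (k-1) by
      ext j
      simp only [Finset.mem_filter, Finset.mem_erase, Finset.mem_Iio]
      omega]
    rw [Finset.card_erase_of_mem (by simp; omega), Nat.card_Iio]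
  · intro u
    constructor
    · rintro ⟨hne, h | h | h⟩
      · refine ⟨by omega, ?_⟩
        intro h2; apply hne; apply Fin.ext; omega
      · have h3 : (u:ℕ) < k + s := by
          rcases h with ⟨h4, h5⟩
          by_contra h6
          rw [dfun, if_neg (by omega)] at h4
          omega
        refine ⟨h3, ?_⟩
        intro h2; apply hne; apply Fin.ext; omega
      · omega
    · rintro ⟨h3, h4⟩
      refine ⟨fun h => h4 (by rw [← h]; exact hv ▸ rfl), ?_⟩
      by_cases huk : (u:ℕ) < k
      · exact Or.inl ⟨by omega, huk⟩
      · refine Or.inr (Or.inl ⟨?_, by omega⟩)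
        rw [dfun, if_pos h3]; omega
end Hcount

section Hsum
variable {n k s : ℕ} (hk : 1 ≤ k) (hkn : k + 2 ≤ n) (hs1 : 1 ≤ s) (hsnk : s ≤ n - k)

lemma two_choose_two' (k : ℕ) : 2 * k.choose 2 = k * (k - 1) := by
  rw [Nat.choose_two_right, Nat.mul_div_cancel' k.even_mul_pred_self.two_dvd]

include hk hkn hs1 hsnk in
lemma Hsum : ∑ v : Fin n, (Hgraph n k s).degree v
    = 2 * (k.choose 2 + (n - k) * (k - 1) + s) := by
  classical
  have hksn : k + s ≤ n := by omega
  set g : ℕ → ℕ := fun j => if j < k - 1 then n - 1 else if j = k - 1 then k + s - 1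
    else dfun k s j with hg
  have hgv : ∀ v : Fin n, (Hgraph n k s).degree v = g v.val := by
    intro v
    by_cases h1 : (v:ℕ) < k - 1
    · rw [Hdeg_small hk hkn hs1 hsnk v h1, hg]; simp [h1]
    · by_cases h2 : (v:ℕ) = k - 1
      · rw [Hdeg_mid hk hkn hs1 hsnk v h2, hg]; simp [h1, h2]
      · rw [Hdeg_big hk hkn hs1 hsnk v (by omega), hg]; simp [h1, h2]
  calc ∑ v : Fin n, (Hgraph n k s).degree v = ∑ v : Fin n, g v.val :=
        Finset.sum_congr rfl fun v _ => hgv v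
    _ = ∑ j ∈ Finset.Iio n, g j := by
        rw [← Fin.map_valEmbedding_univ, Finset.sum_map]; rfl
    _ = ∑ j ∈ Finset.Ico 0 n, g j := by rw [Nat.Iio_eq_range, Finset.range_eq_Ico]
    _ = 2 * (k.choose 2 + (n - k) * (k - 1) + s) := by
        rw [← Finset.sum_Ico_consecutive g (by omega : 0 ≤ k - 1) (by omega : k - 1 ≤ n)]
        rw [← Finset.sum_Ico_consecutive g (by omega : (k-1 : ℕ) ≤ k) (by omega : k ≤ n)]
        rw [← Finset.sum_Ico_consecutive g (by omega : k ≤ k + s) (by omega : k + s ≤ n)]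
        have e1 : ∑ j ∈ Finset.Ico 0 (k-1), g j = (k-1) * (n-1) := by
          rw [Finset.sum_congr rfl (fun j hj => ?_), Finset.sum_const, Nat.card_Ico,
            smul_eq_mul, Nat.sub_zero]
          rw [Finset.mem_Ico] at hj
          simp only [hg, if_pos hj.2]
        have e2 : ∑ j ∈ Finset.Ico (k-1) k, g j = k + s - 1 := by
          rw [show k = (k-1)+1 by omega]
          rw [Finset.sum_Ico_succ_top (by omega)]
          rw [show (k-1+1-1 : ℕ) = k - 1 by omega, Finset.Ico_self, Finset.sum_empty]
          simp [hg]
          omega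
        have e3 : ∑ j ∈ Finset.Ico k (k+s), g j = s * k := by
          rw [Finset.sum_congr rfl (fun j hj => ?_), Finset.sum_const, Nat.card_Ico,
            smul_eq_mul, Nat.add_sub_cancel_left]
          rw [Finset.mem_Ico] at hj
          simp only [hg, if_neg (by omega : ¬ j < k - 1), if_neg (by omega : ¬ j = k - 1),
            dfun, if_pos hj.2]
        have e4 : ∑ j ∈ Finset.Ico (k+s) n, g j = (n - (k+s)) * (k - 1) := by
          rw [Finset.sum_congr rfl (fun j hj => ?_), Finset.sum_const, Nat.card_Ico,
            smul_eq_mul]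
          rw [Finset.mem_Ico] at hj
          simp only [hg, if_neg (by omega : ¬ j < k - 1), if_neg (by omega : ¬ j = k - 1),
            dfun, if_neg (by omega : ¬ j < k + s)]
        rw [e1, e2, e3, e4]
        have hc := two_choose_two' k
        zify [hk, (by omega : 1 ≤ n), (by omega : k ≤ n), (by omega : k + s ≤ n),
          (by omega : 1 ≤ k + s), (by omega : k ≤ n)]
        rw [show ((2:ℤ) * (↑(k.choose 2) + (↑n - ↑k) * (↑k - 1) + ↑s))
            = 2 * ↑(k.choose 2) + 2 * ((↑n - ↑k) * (↑k - 1)) + 2 * ↑s by ring]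
        have hc' : (2:ℤ) * ↑(k.choose 2) = ↑k * (↑k - 1) := by
          have := hc
          zify [hk] at this
          linarith
        rw [hc']
        ring
end Hsum

section HL
variable {n k s : ℕ} (hk : 1 ≤ k) (hkn : k + 2 ≤ n) (hs1 : 1 ≤ s) (hsnk : s ≤ n - k)

include hk hkn hs1 hsnk in
lemma Hedges : Nat.card (Hgraph n k s).edgeSet = k.choose 2 + (n - k) * (k - 1) + s := by
  classical
  have h := SimpleGraph.sum_degrees_eq_twice_card_edges (Hgraph n k s)
  rw [Hsum hk hkn hs1 hsnk] at h
  have h2 : Nat.card (Hgraph n k s).edgeSet = #(Hgraph n k s).edgeFinset := by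
    rw [Nat.card_eq_fintype_card, ← SimpleGraph.edgeFinset_card]
  omega

/-- the clique cut in `Hgraph` -/
def XK (n k : ℕ) : Finset (Fin n) := univ.filter (fun v : Fin n => (v:ℕ) < k)

include hkn in
lemma XK_card : #(XK n k) = k := by
  classical
  rw [XK, card_filter_val n (· < k)]
  rw [show (Finset.Iio n).filter (· < k) = Finset.Iio k by
    ext j; simp only [Finset.mem_filter, Finset.mem_Iio]; omega]
  exact Nat.card_Iio k

lemma XK_notmem (w : Fin n) : w ∉ XK n k ↔ k ≤ (w:ℕ) := by
  simp [XK]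

lemma XK_noadj : ∀ a b, ¬ ((Hgraph n k s).delVerts (XK n k)).Adj a b := by
  intro a b hab
  have ha := (XK_notmem (n := n) (k := k) (a : Fin n)).mp a.2
  have hb := (XK_notmem (n := n) (k := k) (b : Fin n)).mp b.2
  obtain ⟨-, h | h | h⟩ := hab
  · omega
  · have := dfun_le k s (((b : Fin n)):ℕ); omega
  · have := dfun_le k s (((a : Fin n)):ℕ); omega

include hkn in
lemma XK_cardW : Fintype.card {w : Fin n // w ∉ XK n k} = n - k := by
  classical
  have h : Fintype.card {w : Fin n // w ∉ XK n k} = n - #(XK n k) := by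
    simp [Fintype.card_subtype_compl]
  rw [h, XK_card hkn]

include hkn in
lemma XK_nonempty : Nonempty {w : Fin n // w ∉ XK n k} :=
  ⟨⟨⟨k, by omega⟩, by rw [XK_notmem]⟩⟩

include hkn in
lemma XK_omega : ((Hgraph n k s).delVerts (XK n k)).omegaComp = n - k := by
  rw [MT.omega_of_bot _ XK_noadj, XK_cardW hkn]

include hkn in
lemma XK_cut : (Hgraph n k s).IsVertexCut (XK n k) := by
  rw [SimpleGraph.IsVertexCut, XK_omega hkn]; omega

include hkn in
lemma XK_tau : ((Hgraph n k s).delVerts (XK n k)).tauMax = 1 := by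
  haveI := XK_nonempty (n := n) (k := k) hkn
  exact MT.tau_of_bot _ XK_noadj

end HL

theorem min_tenacity (n m k : ℕ) (h1 : n - 1 ≤ m) (h2 : m ≤ n.choose 2 - 1)
    (hk1 : k.choose 2 + (n - k) * (k - 1) < m)
    (hk2 : m ≤ k.choose 2 + (n - k) * k)
    (G : SimpleGraph (Fin n)) (hG : G.Connected) (hGm : Nat.card G.edgeSet = m)
    (hmin : ∀ H : SimpleGraph (Fin n), H.Connected → Nat.card H.edgeSet = m →
      G.tenacity ≤ H.tenacity) :
    G.tenacity = ((k : ℝ) + 1) / ((n : ℝ) - (k : ℝ)) := by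
  classical
  -- basic facts about k and n
  have hk0 : 1 ≤ k := by
    rcases Nat.eq_zero_or_pos k with rfl | h
    · simp [Nat.choose] at hk1 hk2; omega
    · exact h
  have hkltn : k < n := by
    by_contra h
    push_neg at h
    have hnk0 : n - k = 0 := by omega
    rw [hnk0] at hk1 hk2
    simp at hk1 hk2
    omega
  have hkn2 : k + 2 ≤ n := by
    by_contra h
    push_neg at h
    have hn : n = k + 1 := by omega
    subst hn
    have hch : (k+1).choose 2 = k + k.choose 2 := by
      rw [Nat.choose_succ_succ]
      simp [Nat.choose_one_right]
    have hnk1 : k + 1 - k = 1 := by omega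
    rw [hnk1] at hk1
    rw [hch] at h2
    omega
  -- the parameter s
  set s : ℕ := m - (k.choose 2 + (n - k) * (k - 1)) with hs
  have hs1 : 1 ≤ s := by omega
  have hmul : (n - k) * k = (n - k) * (k - 1) + (n - k) := by
    have h := Nat.mul_succ (n - k) (k - 1)
    rw [Nat.succ_eq_add_one, show k - 1 + 1 = k by omega] at h
    omega
  have hsnk : s ≤ n - k := by omega
  have hm : m = k.choose 2 + (n - k) * (k - 1) + s := by omega
  have hk1imp : k = 1 → k + s = n := by
    intro hk1'
    subst hk1'
    simp [Nat.choose] at hk1 hk2 hs ⊢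
    omega
  -- upper bound via the extremal graph H
  have hHconn := Hconn hk0 hkn2 hs1 hsnk hk1imp
  have hHm : Nat.card (Hgraph n k s).edgeSet = m := by
    rw [Hedges hk0 hkn2 hs1 hsnk]; omega
  have hub : G.tenacity ≤ ((k : ℝ) + 1) / ((n : ℝ) - (k : ℝ)) := by
    refine le_trans (hmin _ hHconn hHm) ?_
    apply csInf_le
    · refine ⟨0, ?_⟩
      rintro t ⟨X, hX, rfl⟩
      exact div_nonneg (add_nonneg (Nat.cast_nonneg _) (Nat.cast_nonneg _)) (Nat.cast_nonneg _)
    · refine ⟨XK n k, XK_cut hkn2, ?_⟩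
      rw [XK_card hkn2, XK_tau hkn2, XK_omega hkn2]
      rw [Nat.cast_sub (by omega : k ≤ n)]
      push_cast
      ring
  -- lower bound: every vertex cut has value at least (k+1)/(n-k)
  have hlb : ((k : ℝ) + 1) / ((n : ℝ) - (k : ℝ)) ≤ G.tenacity := by
    -- nonemptiness: G is not complete
    have hnedge : ∃ u v : Fin n, u ≠ v ∧ ¬ G.Adj u v := by
      by_contra h
      push_neg at h
      have hGtop : G = ⊤ := by
        ext a b
        simp only [SimpleGraph.top_adj]
        exact ⟨fun hab => G.ne_of_adj hab, fun hab => h a b hab⟩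
      have : Nat.card G.edgeSet = n.choose 2 := by
        rw [hGtop, Nat.card_eq_fintype_card, ← SimpleGraph.edgeFinset_card]
        have := SimpleGraph.card_edgeFinset_top_eq_card_choose_two (V := Fin n)
        rw [Fintype.card_fin] at this
        rw [this]
      have hpos : 0 < n.choose 2 := Nat.choose_pos (by omega)
      omega
    obtain ⟨u, v, huv, hna⟩ := hnedge
    apply le_csInf
    · exact ⟨_, Finset.univ \ {u, v}, MT.cut_of_nonedge G huv hna, rfl⟩
    · rintro t ⟨X, hX, rfl⟩
      exact MT.cut_lower n m k hk1 hkn2 G hGm X hX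
  linarith
end

section
/- For integers n, m with n−1 ≤ m ≤ C(n,2)−1 and k the unique integer satisfying C(k,2) + (n−k)(k−1) < m ≤ C(k,2) + (n−k)k, every connected graph G with n vertices and m edges satisfies T(G) ≥ (k+1)/(n−k). -/
open SimpleGraph Finset

lemma key_facts {n : ℕ} (G : SimpleGraph (Fin n)) (X : Finset (Fin n))
    (hcut : G.IsVertexCut X) :
    1 ≤ (G.delVerts X).tauMax ∧
    (X.card : ℤ) + (G.delVerts X).tauMax + (G.delVerts X).omegaComp ≤ n + 1 ∧
    2 * (Nat.card G.edgeSet : ℤ) ≤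
      X.card * (n - 1) + (n - X.card) * (X.card + (G.delVerts X).tauMax - 1) := by
  classical
  set H := G.delVerts X with hH
  have hω2 : 2 ≤ H.omegaComp := hcut
  haveI : Fintype H.ConnectedComponent := Fintype.ofFinite _
  have hωcard : H.omegaComp = Fintype.card H.ConnectedComponent := Nat.card_eq_fintype_card
  set f : H.ConnectedComponent → ℕ :=
    fun c => Nat.card {v : {v : Fin n // v ∉ X} // H.connectedComponentMk v = c} with hf
  have hτ : H.tauMax = sSup (Set.range f) := rfl
  have hbdd : BddAbove (Set.range f) := (Set.finite_range f).bddAbove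
  have hfle : ∀ c, f c ≤ H.tauMax := fun c => le_csSup hbdd ⟨c, rfl⟩
  have hfpos : ∀ c, 1 ≤ f c := by
    intro c
    obtain ⟨v, hv⟩ := c.exists_rep
    haveI : Nonempty {w : {v : Fin n // v ∉ X} // H.connectedComponentMk w = c} := ⟨⟨v, hv⟩⟩
    exact Nat.card_pos
  have hne : Nonempty H.ConnectedComponent := by
    have h2 : 2 ≤ Nat.card H.ConnectedComponent := hω2
    have : 0 < Nat.card H.ConnectedComponent := by omega
    exact (Nat.card_pos_iff.mp this).1
  obtain ⟨c0, hc0⟩ : ∃ c0, f c0 = H.tauMax := by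
    have h := Nat.sSup_mem (Set.range_nonempty f) hbdd
    rw [← hτ] at h
    exact h
  have hτ1 : 1 ≤ H.tauMax := hc0 ▸ hfpos c0
  -- sum of fiber cards equals n - |X|
  have hsum : ∑ c, f c = n - X.card := by
    have e1 : Fintype.card {v : Fin n // v ∉ X} = n - X.card := by
      rw [Fintype.card_subtype_compl]
      simp
    have e2 : Fintype.card (Σ c : H.ConnectedComponent,
        {v : {v : Fin n // v ∉ X} // H.connectedComponentMk v = c}) =
        Fintype.card {v : Fin n // v ∉ X} :=
      Fintype.card_congr (Equiv.sigmaFiberEquiv _)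
    rw [Fintype.card_sigma] at e2
    rw [← e1, ← e2]
    congr 1
    ext c
    rw [hf]
    exact Nat.card_eq_fintype_card
  -- structural bound: τ + (ω - 1) ≤ n - |X|
  have hstruct : H.tauMax + (H.omegaComp - 1) ≤ n - X.card := by
    rw [← hsum]
    have h1 : ∑ c ∈ (univ.erase c0), 1 ≤ ∑ c ∈ (univ.erase c0), f c :=
      Finset.sum_le_sum fun c _ => hfpos c
    have h2 : ∑ c, f c = f c0 + ∑ c ∈ univ.erase c0, f c :=
      (Finset.add_sum_erase univ f (mem_univ c0)).symm
    simp only [Finset.sum_const, smul_eq_mul, mul_one, Finset.card_erase_of_mem (mem_univ c0),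
      Finset.card_univ] at h1
    omega
  have hXle : X.card ≤ n := by
    calc X.card ≤ Fintype.card (Fin n) := X.card_le_univ
    _ = n := Fintype.card_fin n
  have hn2 : 2 ≤ n := by omega
  refine ⟨hτ1, by omega, ?_⟩
  -- handshake and degree bounds
  haveI : DecidableRel G.Adj := Classical.decRel _
  have hhs : ∑ v, G.degree v = 2 * Nat.card G.edgeSet := by
    rw [G.sum_degrees_eq_twice_card_edges, G.edgeFinset_card, Nat.card_eq_fintype_card]
  have hdegX : ∀ v : Fin n, G.degree v ≤ n - 1 := by
    intro v
    have := G.degree_lt_card_verts v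
    rw [Fintype.card_fin] at this
    omega
  have hdegO : ∀ v : Fin n, (hv : v ∉ X) → G.degree v ≤ X.card + (H.tauMax - 1) := by
    intro v hv
    have hsub : G.neighborSet v ⊆ (↑X : Set (Fin n)) ∪
        (Subtype.val '' ({w : {v : Fin n // v ∉ X} |
          H.connectedComponentMk w = H.connectedComponentMk ⟨v, hv⟩} \ {⟨v, hv⟩})) := by
      intro w hw
      by_cases hwX : w ∈ X
      · exact Or.inl hwX
      · refine Or.inr ⟨⟨w, hwX⟩, ⟨?_, ?_⟩, rfl⟩
        · exact ConnectedComponent.connectedComponentMk_eq_of_adj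
            (show H.Adj ⟨w, hwX⟩ ⟨v, hv⟩ from hw.symm)
        · simp only [Set.mem_singleton_iff]
          intro heq
          exact (G.ne_of_adj hw) (congrArg Subtype.val heq).symm
    have hdeg : G.degree v = (G.neighborSet v).ncard := by
      rw [Set.ncard_eq_toFinset_card', Set.toFinset_card, G.card_neighborSet_eq_degree]
    rw [hdeg]
    calc (G.neighborSet v).ncard
        ≤ ((↑X : Set (Fin n)) ∪ _).ncard := Set.ncard_le_ncard hsub (Set.toFinite _)
      _ ≤ (↑X : Set (Fin n)).ncard + (Subtype.val '' ({w : {v : Fin n // v ∉ X} |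
          H.connectedComponentMk w = H.connectedComponentMk ⟨v, hv⟩} \ {⟨v, hv⟩})).ncard :=
        Set.ncard_union_le _ _
      _ ≤ X.card + (H.tauMax - 1) := by
        gcongr
        · exact le_of_eq (Set.ncard_coe_finset X)
        · rw [Set.ncard_image_of_injective _ Subtype.val_injective,
            Set.ncard_diff_singleton_of_mem
              (show (⟨v, hv⟩ : {v : Fin n // v ∉ X}) ∈ {w : {v : Fin n // v ∉ X} |
                H.connectedComponentMk w = H.connectedComponentMk ⟨v, hv⟩} from rfl)]
          have : ({w : {v : Fin n // v ∉ X} |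
              H.connectedComponentMk w = H.connectedComponentMk ⟨v, hv⟩}).ncard
              = f (H.connectedComponentMk ⟨v, hv⟩) := by
            rw [hf, ← Nat.card_coe_set_eq]
            rfl
          rw [this]
          have := hfle (H.connectedComponentMk ⟨v, hv⟩)
          omega
  have hbound : 2 * Nat.card G.edgeSet ≤
      X.card * (n - 1) + (n - X.card) * (X.card + (H.tauMax - 1)) := by
    have hsplit : ∑ v ∈ X, G.degree v + ∑ v ∈ Xᶜ, G.degree v = ∑ v, G.degree v :=
      Finset.sum_add_sum_compl X (fun v => G.degree v)
    have b1 : ∑ v ∈ X, G.degree v ≤ X.card * (n - 1) :=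
      Finset.sum_le_card_nsmul X (fun v => G.degree v) _ fun v _ => hdegX v
    have b2 : ∑ v ∈ Xᶜ, G.degree v ≤ (n - X.card) * (X.card + (H.tauMax - 1)) := by
      have := Finset.sum_le_card_nsmul Xᶜ (fun v => G.degree v) (X.card + (H.tauMax - 1))
        (fun v hv => hdegO v (Finset.mem_compl.mp hv))
      rwa [Finset.card_compl, Fintype.card_fin, smul_eq_mul] at this
    calc 2 * Nat.card G.edgeSet = ∑ v, G.degree v := hhs.symm
      _ = ∑ v ∈ X, G.degree v + ∑ v ∈ Xᶜ, G.degree v := hsplit.symm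
      _ ≤ X.card * (n - 1) + (n - X.card) * (X.card + (H.tauMax - 1)) := add_le_add b1 b2
  have hn1 : 1 ≤ n := by omega
  zify [hn1, hXle, hτ1] at hbound
  convert hbound using 2 <;> push_cast <;> ring

lemma cut_of_nonadj {n : ℕ} (G : SimpleGraph (Fin n)) (u v : Fin n) (huv : u ≠ v)
    (hadj : ¬ G.Adj u v) : G.IsVertexCut ({u, v} : Finset (Fin n))ᶜ := by
  classical
  set X0 := ({u, v} : Finset (Fin n))ᶜ with hX0
  have hmem : ∀ w : Fin n, w ∉ X0 ↔ w = u ∨ w = v := by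
    intro w; simp [hX0]; tauto
  have hbot : G.delVerts X0 = ⊥ := by
    ext a b
    simp only [SimpleGraph.delVerts, comap_adj, bot_adj, iff_false]
    intro hab
    have ha := (hmem a.1).mp a.2
    have hb := (hmem b.1).mp b.2
    rcases ha with h|h <;> rcases hb with h'|h' <;> rw [h, h'] at hab
    · exact G.irrefl hab
    · exact hadj hab
    · exact hadj (G.adj_symm hab)
    · exact G.irrefl hab
  have hnt : Nontrivial (G.delVerts X0).ConnectedComponent := by
    refine ⟨(G.delVerts X0).connectedComponentMk ⟨u, (hmem u).mpr (Or.inl rfl)⟩,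
      (G.delVerts X0).connectedComponentMk ⟨v, (hmem v).mpr (Or.inr rfl)⟩, fun h => ?_⟩
    have hr := (SimpleGraph.ConnectedComponent.eq).mp h
    rw [hbot] at hr
    exact huv (congrArg Subtype.val (SimpleGraph.reachable_bot.mp hr))
  haveI : Finite (G.delVerts X0).ConnectedComponent :=
    Finite.of_surjective (G.delVerts X0).connectedComponentMk (fun c => c.exists_rep)
  exact Finite.one_lt_card_iff_nontrivial.mpr hnt

set_option maxHeartbeats 2000000 in
theorem tenacity_lower_bound (n m k : ℕ) (h1 : n - 1 ≤ m) (h2 : m ≤ n.choose 2 - 1)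
    (hk1 : k.choose 2 + (n - k) * (k - 1) < m)
    (hk2 : m ≤ k.choose 2 + (n - k) * k)
    (G : SimpleGraph (Fin n)) (hG : G.Connected) (hGm : Nat.card G.edgeSet = m) :
    ((k : ℝ) + 1) / ((n : ℝ) - (k : ℝ)) ≤ G.tenacity := by
  classical
  have hm1 : 1 ≤ m := lt_of_le_of_lt (Nat.zero_le _) hk1
  have hk0 : 1 ≤ k := by
    rcases Nat.eq_zero_or_pos k with rfl | h
    · exact absurd (hk1.trans_le hk2) (by simp)
    · exact h
  have hkn : k < n := by
    by_contra hle
    push_neg at hle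
    have h0 : n - k = 0 := by omega
    rw [h0] at hk1 hk2
    exact absurd (hk1.trans_le hk2) (by simp)
  -- 2 * C(k,2) = k * (k-1)
  have hc2 : 2 * k.choose 2 = k * (k - 1) := by
    rw [Nat.choose_two_right]
    refine Nat.mul_div_cancel' ?_
    rcases Nat.even_or_odd k with he | ho
    · exact Dvd.dvd.mul_right he.two_dvd _
    · obtain ⟨j, hj⟩ := ho
      have : k - 1 = 2 * j := by omega
      rw [this]
      exact Dvd.dvd.mul_left ⟨j, rfl⟩ k
  -- the lower bound on 2m over ℤ
  have h2m : ((k : ℤ) - 1) * (2 * n - k) < 2 * m := by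
    have : 2 * (k.choose 2 + (n - k) * (k - 1)) < 2 * m := by omega
    zify [hk0, hkn.le] at this
    have hc2' : 2 * ((k.choose 2 : ℤ)) = (k : ℤ) * ((k : ℤ) - 1) := by
      zify [hk0] at hc2
      linarith [hc2]
    nlinarith [this, hc2']
  -- existence of a vertex cut
  have hnonadj : ∃ u v : Fin n, u ≠ v ∧ ¬ G.Adj u v := by
    by_contra h
    push_neg at h
    have hG_top : G = ⊤ := by
      ext a b
      exact ⟨fun hab => G.ne_of_adj hab, fun hab => h a b hab⟩
    have hm_eq : Nat.card G.edgeSet = n.choose 2 := by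
      rw [hG_top, Nat.card_eq_fintype_card, ← SimpleGraph.edgeFinset_card,
        SimpleGraph.card_edgeFinset_top_eq_card_choose_two, Fintype.card_fin]
    omega
  obtain ⟨u, v, huv, hadj⟩ := hnonadj
  have hcut0 := cut_of_nonadj G u v huv hadj
  -- main: lower bound every element of the tenacity set
  refine le_csInf ⟨_, ({u, v} : Finset (Fin n))ᶜ, hcut0, rfl⟩ ?_
  rintro t ⟨X, hcut, rfl⟩
  obtain ⟨hτ1, hA, hB⟩ := key_facts G X hcut
  rw [hGm] at hB
  have hω2 : 2 ≤ (G.delVerts X).omegaComp := hcut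
  set c : ℕ := X.card
  set τ : ℕ := (G.delVerts X).tauMax
  set ω : ℕ := (G.delVerts X).omegaComp
  -- derive c + τ ≥ k + 1 over ℤ
  have hs : (k : ℤ) + 1 ≤ (c : ℤ) + τ := by
    by_contra hcon
    push_neg at hcon
    have hck : (c : ℤ) ≤ (k : ℤ) - 1 := by
      have : (1 : ℤ) ≤ τ := by exact_mod_cast hτ1
      omega
    have hcn : (c : ℤ) ≤ n := by
      have : (2 : ℤ) ≤ ω := by exact_mod_cast hω2
      have : (1 : ℤ) ≤ τ := by exact_mod_cast hτ1
      omega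
    have p1 : (0 : ℤ) ≤ ((n : ℤ) - c) * ((k : ℤ) - c - τ) := by
      have h1 : (0 : ℤ) ≤ (n : ℤ) - c := by omega
      have h2 : (0 : ℤ) ≤ (k : ℤ) - c - τ := by omega
      exact mul_nonneg h1 h2
    have p2 : (0 : ℤ) ≤ ((k : ℤ) - 1 - c) * ((n : ℤ) - k) := by
      have h1 : (0 : ℤ) ≤ (k : ℤ) - 1 - c := by omega
      have h2 : (0 : ℤ) ≤ (n : ℤ) - k := by
        have : (k : ℤ) < n := by exact_mod_cast hkn
        omega
      exact mul_nonneg h1 h2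
    nlinarith [h2m, hB, p1, p2]
  -- final inequality over ℤ
  have hfinal : ((k : ℤ) + 1) * ω ≤ ((c : ℤ) + τ) * ((n : ℤ) - k) := by
    have q1 : (0 : ℤ) ≤ ((k : ℤ) + 1) * ((n : ℤ) + 1 - c - τ - ω) := by
      refine mul_nonneg (by positivity) ?_
      omega
    have q2 : (0 : ℤ) ≤ ((c : ℤ) + τ - k - 1) * ((n : ℤ) + 1) := by
      refine mul_nonneg (by omega) (by positivity)
    nlinarith [q1, q2]
  -- cast to ℝ
  have hnk : (0 : ℝ) < (n : ℝ) - k := by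
    have : (k : ℝ) < n := by exact_mod_cast hkn
    linarith
  have hωR : (0 : ℝ) < (ω : ℝ) := by
    have : (0 : ℕ) < ω := by omega
    exact_mod_cast this
  rw [div_le_div_iff₀ hnk hωR]
  exact_mod_cast hfinal
end
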